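/- arXiv:1303.2424 — 10 statements merged into one kernel-verified Lean document; each statement's English description precedes it below -/
import Mathlib

section
/- Let A be a commutative topological algebra over ℂ with a continuous involution making it a star algebra, let B be a unital C*-algebra, and let φ : A → B be a continuous unital star algebra homomorphism whose range is dense in B. Let s : A → ℂ be a continuous star character of A (a continuous unital ℂ-algebra homomorphism with s(a*) = conj(s(a))) such that s ≠ t∘φ for every character t of B (i.e. for every continuous unital ℂ-algebra homomorphism t : B → ℂ). Then the closure of φ(ker s) is all of B: closure { φ(a) : a ∈ A, s(a) = 0 } = B. -/
/-- Let `A` be a commutative topological star algebra over ℂ, `B` a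
unital C*-algebra, `φ : A → B` a continuous unital star algebra homomorphism with dense
range, and `s` a continuous star character of `A` which is not of the form `t ∘ φ` for
any character `t` of `B`. Then `closure (φ(ker s)) = B`. -/
theorem stmt4 {A B : Type*} [CommRing A] [Algebra ℂ A] [StarRing A] [StarModule ℂ A]
    [TopologicalSpace A] [IsTopologicalAddGroup A] [ContinuousSMul ℂ A] [ContinuousStar A]
    (hA : ∀ a : A, Continuous fun x => a * x)
    [NormedRing B] [StarRing B] [CStarRing B] [NormedAlgebra ℂ B] [CompleteSpace B]
    [StarModule ℂ B]
    (φ : A →⋆ₐ[ℂ] B) (hφ : Continuous φ) (hdense : DenseRange ⇑φ)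
    (s : A →⋆ₐ[ℂ] ℂ) (hs : Continuous s)
    (hsep : ∀ t : B →ₐ[ℂ] ℂ, Continuous t → ∃ a : A, s a ≠ t (φ a)) :
    closure (⇑φ '' {a : A | s a = 0}) = Set.univ := by
  classical
  -- `B` is commutative since `φ` has dense range and `A` is commutative
  have hcomm : ∀ b c : B, b * c = c * b := by
    have h : (fun p : B × B => p.1 * p.2) = fun p : B × B => p.2 * p.1 := by
      refine (hdense.prodMap hdense).equalizer
        (continuous_fst.mul continuous_snd) (continuous_snd.mul continuous_fst) ?_
      ext ⟨a, a'⟩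
      simp only [Function.comp_apply, Prod.map_apply]
      rw [← map_mul, ← map_mul, mul_comm]
    intro b c
    exact congrFun h (b, c)
  letI : NormedCommRing B := { ‹NormedRing B› with mul_comm := hcomm }
  set C : Set B := closure (⇑φ '' {a : A | s a = 0}) with hC
  have hmemC : ∀ a : A, s a = 0 → φ a ∈ C := fun a ha => subset_closure ⟨a, ha, rfl⟩
  -- multiplication by a fixed element preserves `C`
  have hmul1 : ∀ a : A, s a = 0 → ∀ b : B, b * φ a ∈ C := by
    intro a ha b
    have hmt : Set.MapsTo (fun x : B => x * φ a) (Set.range ⇑φ) (⇑φ '' {a : A | s a = 0}) := by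
      rintro x ⟨y, rfl⟩
      exact ⟨y * a, by simp [Set.mem_setOf_eq, ha], map_mul φ y a⟩
    have := hmt.closure (continuous_id.mul continuous_const)
    exact this (hdense b)
  have hmulC : ∀ b : B, ∀ x ∈ C, b * x ∈ C := by
    intro b x hx
    have hmt : Set.MapsTo (fun y : B => b * y) (⇑φ '' {a : A | s a = 0}) C := by
      rintro y ⟨a, ha, rfl⟩
      exact hmul1 a ha b
    have := hmt.closure (continuous_const.mul continuous_id)
    rw [closure_closure] at this
    exact this hx
  -- `C` is closed under addition, via the topological closure of an additive subgroup
  have haddC : ∀ x ∈ C, ∀ y ∈ C, x + y ∈ C := by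
    intro x hx y hy
    let K : AddSubgroup A :=
      { carrier := {a : A | s a = 0}
        add_mem' := fun hp hq => by
          simp only [Set.mem_setOf_eq] at *
          rw [map_add, hp, hq, add_zero]
        zero_mem' := by simp
        neg_mem' := fun hp => by
          simp only [Set.mem_setOf_eq] at *
          rw [map_neg, hp, neg_zero] }
    let G : AddSubgroup B := K.map (φ : A →+* B).toAddMonoidHom
    have hGC : C = closure (G : Set B) := by
      rw [hC]
      congr 1
    rw [hGC] at hx hy ⊢
    exact G.topologicalClosure.add_mem hx hy
  -- package `C` as an ideal
  let J : Ideal B :=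
    { carrier := C
      add_mem' := fun hx hy => haddC _ hx _ hy
      zero_mem' := by simpa using hmemC 0 (map_zero s)
      smul_mem' := fun b x hx => by simpa [smul_eq_mul] using hmulC b x hx }
  have hJtop : J = ⊤ := by
    by_contra h
    obtain ⟨M, hM, hJM⟩ := J.exists_le_maximal h
    haveI := hM
    let t := M.toCharacterSpace
    let t' : B →ₐ[ℂ] ℂ := WeakDual.CharacterSpace.equivAlgHom t
    have ht' : Continuous t' := map_continuous t
    obtain ⟨a, ha⟩ := hsep t' ht'
    apply ha
    have h0 : s (a - algebraMap ℂ A (s a)) = 0 := by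
      rw [map_sub, AlgHomClass.commutes]
      simp
    have hmem : φ (a - algebraMap ℂ A (s a)) ∈ M := hJM (hmemC _ h0)
    have ht0 : t' (φ (a - algebraMap ℂ A (s a))) = 0 :=
      M.toCharacterSpace_apply_eq_zero_of_mem hmem
    have hfin : t' (φ a) = s a := by
      rw [map_sub, map_sub, AlgHomClass.commutes, AlgHomClass.commutes] at ht0
      simpa [sub_eq_zero] using ht0
    exact hfin.symm
  calc C = (J : Set B) := rfl
    _ = ((⊤ : Ideal B) : Set B) := by rw [hJtop]
    _ = Set.univ := Submodule.top_coe
end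

section
/- Let A be a topological algebra over ℂ and let X be a topological A-module (a topological ℂ-vector space with an A-module action a • v that is separately continuous). Fix x ∈ X, a natural number n, and a continuous seminorm p : X → ℝ. For a continuous unital ℂ-algebra homomorphism t : A → ℂ let I_t = ker t, and let I_t^{n+1}·X denote the linear span of { (a₁·…·a_{n+1}) • v : a₁,…,a_{n+1} ∈ I_t, v ∈ X }. Then the function t ↦ inf { p(x + y) : y ∈ I_t^{n+1}·X }, defined on the set of continuous unital ℂ-algebra homomorphisms A → ℂ endowed with the topology of pointwise convergence, is upper semicontinuous. -/
open WeakDual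

lemma stmt6_eval_cont {A : Type*} [Ring A] [Algebra ℂ A] [TopologicalSpace A]
    (b : A) : Continuous fun t : characterSpace ℂ A => t b :=
  (WeakDual.eval_continuous b).comp continuous_subtype_val

lemma stmt6_prod_cont {A : Type*} [Ring A] [Algebra ℂ A] [TopologicalSpace A]
    [IsTopologicalAddGroup A] [ContinuousSMul ℂ A]
    (hA₁ : ∀ a : A, Continuous fun x => a * x)
    (hA₂ : ∀ a : A, Continuous fun x => x * a) :
    ∀ (m : ℕ) (a : Fin m → A),
      Continuous fun t : characterSpace ℂ A =>
        (List.ofFn fun i => a i - algebraMap ℂ A (t (a i))).prod := by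
  intro m
  induction m with
  | zero => intro a; simpa using continuous_const
  | succ k ih =>
    intro a
    have hrest := ih (fun i => a i.castSucc)
    have key : (fun t : characterSpace ℂ A =>
        (List.ofFn fun i => a i - algebraMap ℂ A (t (a i))).prod) =
        fun t => ((List.ofFn fun i : Fin k =>
            a i.castSucc - algebraMap ℂ A (t (a i.castSucc))).prod) * a (Fin.last k)
          - t (a (Fin.last k)) • (List.ofFn fun i : Fin k =>
            a i.castSucc - algebraMap ℂ A (t (a i.castSucc))).prod := by
      funext t
      rw [List.ofFn_succ', List.prod_concat, mul_sub, ← Algebra.commutes,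
        ← Algebra.smul_def]
    rw [key]
    exact ((hA₂ (a (Fin.last k))).comp hrest).sub
      ((stmt6_eval_cont (a (Fin.last k))).smul hrest)

/-- Let `A` be a topological algebra over ℂ and `X` a topological
`A`-module. For `x ∈ X`, `n ∈ ℕ` and a continuous seminorm `p` on `X`, the function
`t ↦ inf { p(x + y) : y ∈ I_t^{n+1}·X }` is upper semicontinuous on the character
space of `A` (with the topology of pointwise convergence), where `I_t = ker t` and
`I_t^{n+1}·X` is the linear span of `{ (a₁⋯a_{n+1}) • v : aᵢ ∈ I_t, v ∈ X }`. -/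
theorem stmt6 {A X : Type*} [Ring A] [Algebra ℂ A] [TopologicalSpace A]
    [IsTopologicalAddGroup A] [ContinuousSMul ℂ A]
    (hA₁ : ∀ a : A, Continuous fun x => a * x)
    (hA₂ : ∀ a : A, Continuous fun x => x * a)
    [AddCommGroup X] [Module ℂ X] [Module A X] [IsScalarTower ℂ A X]
    [TopologicalSpace X] [IsTopologicalAddGroup X] [ContinuousSMul ℂ X]
    (hX₁ : ∀ a : A, Continuous fun v : X => a • v)
    (hX₂ : ∀ v : X, Continuous fun a : A => a • v)
    (x : X) (n : ℕ) (p : Seminorm ℂ X) (hp : Continuous fun v => p v) :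
    UpperSemicontinuous (fun t : characterSpace ℂ A =>
      ⨅ y : ↥(Submodule.span ℂ {w : X | ∃ (a : Fin (n + 1) → A) (v : X),
          (∀ i, t (a i) = 0) ∧ w = (List.ofFn a).prod • v}),
        p (x + (y : X))) := by
  classical
  set gen : characterSpace ℂ A → Set X := fun t =>
    {w : X | ∃ (a : Fin (n + 1) → A) (v : X),
      (∀ i, t (a i) = 0) ∧ w = (List.ofFn a).prod • v} with hgen
  have hbdd : ∀ (t : characterSpace ℂ A),
      BddBelow (Set.range fun y : ↥(Submodule.span ℂ (gen t)) => p (x + (y : X))) :=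
    fun t => ⟨0, by rintro r ⟨y, rfl⟩; exact apply_nonneg p _⟩
  intro t₀ ε hε
  -- pick a good element y₀
  obtain ⟨y₀, hy₀⟩ := exists_lt_of_ciInf_lt hε
  obtain ⟨c, hcs, hcsum⟩ := Submodule.mem_span_set.mp y₀.2
  -- choose data for each generator
  have key : ∀ w : X, ∃ (a : Fin (n + 1) → A) (v : X),
      w ∈ gen t₀ → ((∀ i, t₀ (a i) = 0) ∧ w = (List.ofFn a).prod • v) := by
    intro w
    by_cases h : w ∈ gen t₀
    · obtain ⟨a, v, h1, h2⟩ := h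
      exact ⟨a, v, fun _ => ⟨h1, h2⟩⟩
    · exact ⟨fun _ => 0, 0, fun h' => absurd h' h⟩
  choose a v hav using key
  set Y : characterSpace ℂ A → X := fun t =>
    ∑ w ∈ c.support, c w •
      ((List.ofFn fun i => a w i - algebraMap ℂ A (t (a w i))).prod • v w) with hY
  -- Y t₀ = y₀
  have hY₀ : Y t₀ = (y₀ : X) := by
    rw [hY, ← hcsum, Finsupp.sum]
    refine Finset.sum_congr rfl fun w hw => ?_
    obtain ⟨h1, h2⟩ := hav w (hcs hw)
    have : (fun i => a w i - algebraMap ℂ A (t₀ (a w i))) = a w := by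
      funext i; rw [h1 i, map_zero, sub_zero]
    rw [this, ← h2]
  -- Y t is in the span for every t
  have hYmem : ∀ t : characterSpace ℂ A, Y t ∈ Submodule.span ℂ (gen t) := by
    intro t
    refine Submodule.sum_mem _ fun w hw => Submodule.smul_mem _ _ ?_
    refine Submodule.subset_span ?_
    refine ⟨fun i => a w i - algebraMap ℂ A (t (a w i)), v w, fun i => ?_, rfl⟩
    rw [map_sub, AlgHomClass.commutes (F := characterSpace ℂ A)]; simp
  -- continuity of t ↦ p (x + Y t)
  have hYcont : Continuous Y := by
    refine continuous_finset_sum _ fun w hw => ?_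
    exact ((hX₂ (v w)).comp (stmt6_prod_cont hA₁ hA₂ (n + 1) (a w))).const_smul (c w)
  have hcont : Continuous fun t => p (x + Y t) :=
    hp.comp (continuous_const.add hYcont)
  -- conclude
  have hopen : IsOpen {t : characterSpace ℂ A | p (x + Y t) < ε} :=
    isOpen_lt hcont continuous_const
  have ht₀ : t₀ ∈ {t : characterSpace ℂ A | p (x + Y t) < ε} := by
    simpa [hY₀] using hy₀
  filter_upwards [hopen.mem_nhds ht₀] with t ht
  exact lt_of_le_of_lt (ciInf_le (hbdd t) (⟨Y t, hYmem t⟩ :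
    ↥(Submodule.span ℂ (gen t)))) ht
end

section
/- Let A be a topological algebra over ℂ. Fix x ∈ A and a continuous seminorm p : A → ℝ. For a continuous unital ℂ-algebra homomorphism t : A → ℂ let I_t = ker t and let I_t² denote the linear span of { a·b : a, b ∈ I_t }. Then the function t ↦ inf { p(x − t(x)·1 + z) : z ∈ I_t² }, defined on the set of continuous unital ℂ-algebra homomorphisms A → ℂ endowed with the topology of pointwise convergence, is upper semicontinuous. -/
open WeakDual

private lemma expand_aux {A : Type*} [Ring A] [Algebra ℂ A] (a b : A) (α β : ℂ) :
    (a - α•(1:A)) * (b - β•(1:A)) = a*b - β•a - α•b + (α*β)•(1:A) := by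
  simp [mul_sub, sub_mul, mul_smul_comm, smul_mul_assoc, smul_smul, smul_sub, mul_comm β α]
  abel

/-- Let `A` be a topological algebra over ℂ, `x ∈ A` and `p` a
continuous seminorm on `A`. The function `t ↦ inf { p(x − t(x)·1 + z) : z ∈ I_t² }`
is upper semicontinuous on the character space of `A` (with the topology of pointwise
convergence), where `I_t = ker t` and `I_t²` is the linear span of
`{ a·b : a, b ∈ I_t }`. -/
theorem stmt7 {A : Type*} [Ring A] [Algebra ℂ A] [TopologicalSpace A]
    [IsTopologicalAddGroup A] [ContinuousSMul ℂ A]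
    (hA₁ : ∀ a : A, Continuous fun y => a * y)
    (hA₂ : ∀ a : A, Continuous fun y => y * a)
    (x : A) (p : Seminorm ℂ A) (hp : Continuous fun v => p v) :
    UpperSemicontinuous (fun t : characterSpace ℂ A =>
      ⨅ z : ↥(Submodule.span ℂ {w : A | ∃ a b : A, t a = 0 ∧ t b = 0 ∧ w = a * b}),
        p (x - t x • (1 : A) + (z : A))) := by
  have hev : ∀ a : A, Continuous fun t : characterSpace ℂ A => t a := fun a =>
    (WeakDual.eval_continuous a).comp continuous_subtype_val
  intro t₀ ε hε
  -- nonempty index + bddBelow facts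
  have hne : ∀ t : characterSpace ℂ A,
      Nonempty ↥(Submodule.span ℂ {w : A | ∃ a b : A, t a = 0 ∧ t b = 0 ∧ w = a * b}) :=
    fun t => ⟨0, Submodule.zero_mem _⟩
  have hbdd : ∀ t : characterSpace ℂ A, BddBelow (Set.range fun
      z : ↥(Submodule.span ℂ {w : A | ∃ a b : A, t a = 0 ∧ t b = 0 ∧ w = a * b}) =>
      p (x - t x • (1 : A) + (z : A))) := by
    intro t
    exact ⟨0, by rintro r ⟨z, rfl⟩; exact apply_nonneg p _⟩
  haveI := hne t₀
  obtain ⟨z₀, hz₀⟩ := exists_lt_of_ciInf_lt hε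
  -- write z₀ as finite combination
  obtain ⟨n, f, g, hg⟩ := Submodule.mem_span_set'.mp z₀.2
  choose a b ha hb hab using fun i => (g i).2
  -- the perturbed element
  set G : characterSpace ℂ A → A := fun t => x - t x • (1:A) +
    ∑ i, f i • ((a i) * (b i) - t (b i) • (a i) - t (a i) • (b i)
      + (t (a i) * t (b i)) • (1:A)) with hG
  have hGfac : ∀ t : characterSpace ℂ A, G t = x - t x • (1:A) +
      ∑ i, f i • (((a i) - t (a i) • (1:A)) * ((b i) - t (b i) • (1:A))) := by
    intro t
    simp only [hG, expand_aux]
  have hGmem : ∀ t : characterSpace ℂ A,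
      (∑ i, f i • (((a i) - t (a i) • (1:A)) * ((b i) - t (b i) • (1:A)))) ∈
        Submodule.span ℂ {w : A | ∃ a b : A, t a = 0 ∧ t b = 0 ∧ w = a * b} := by
    intro t
    refine Submodule.sum_mem _ fun i _ => Submodule.smul_mem _ _ (Submodule.subset_span ?_)
    refine ⟨(a i) - t (a i) • (1:A), (b i) - t (b i) • (1:A), ?_, ?_, rfl⟩ <;>
      simp [map_sub, map_smul, map_one, smul_eq_mul]
  -- continuity of p ∘ G
  have hGc : Continuous G := by
    apply Continuous.add
    · exact continuous_const.sub (((hev x).smul continuous_const))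
    · refine continuous_finset_sum _ fun i _ => Continuous.smul continuous_const ?_
      refine Continuous.add ?_ (((hev (a i)).mul (hev (b i))).smul continuous_const)
      refine Continuous.sub ?_ ((hev (a i)).smul continuous_const)
      exact continuous_const.sub ((hev (b i)).smul continuous_const)
  have hGt₀ : p (G t₀) < ε := by
    have : G t₀ = x - t₀ x • (1:A) + (z₀ : A) := by
      have hsum : ∀ i : Fin n, f i • ((a i) * (b i) - t₀ (b i) • (a i) - t₀ (a i) • (b i)
          + (t₀ (a i) * t₀ (b i)) • (1:A)) = f i • ((g i : A)) := by
        intro i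
        rw [ha, hb, hab]
        simp
      simp only [hG, Finset.sum_congr rfl fun i _ => hsum i, hg]
    rwa [this]
  have hevent : ∀ᶠ t in nhds t₀, p (G t) < ε :=
    ((hp.comp hGc).continuousAt).eventually_lt continuousAt_const hGt₀
  filter_upwards [hevent] with t ht
  calc (⨅ z : ↥(Submodule.span ℂ {w : A | ∃ a b : A, t a = 0 ∧ t b = 0 ∧ w = a * b}),
        p (x - t x • (1 : A) + (z : A)))
      ≤ p (G t) := by
        rw [hGfac t]
        exact ciInf_le (hbdd t) ⟨_, hGmem t⟩
    _ < ε := ht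
end

section
/- Let A be a unital ℂ-algebra and let X, Y be left A-modules that are topological ℂ-vector spaces with separately continuous A-actions. Let D : X → Y be a continuous ℂ-linear map that is a differential operator of order at most n, i.e. for all a₀, …, a_n ∈ A the iterated commutator [...[D, a₀], …, a_n] vanishes, where [D, a](x) = D(a • x) − a • D(x). Then for every left ideal I of A, D maps the closure of I^{n+1}·X into the closure of I·Y, where I^{n+1}·X is the linear span of { (a₁⋯a_{n+1}) • v : aᵢ ∈ I, v ∈ X } and I·Y is the linear span of { a • w : a ∈ I, w ∈ Y }. -/
/-- The commutator `[D, a](x) = D(a • x) − a • D(x)` of a map `D : X → Y` of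
`A`-modules with an element `a : A`. -/
def brkt {A X Y : Type*} [SMul A X] [SMul A Y] [Sub Y] (D : X → Y) (a : A) : X → Y :=
  fun x => D (a • x) - a • D x

/-- Let `A` be a unital ℂ-algebra and `X`, `Y` left `A`-modules that
are topological ℂ-vector spaces with separately continuous `A`-actions. If the
continuous ℂ-linear map `D : X → Y` is a differential operator of order at most `n`
(all iterated commutators with `n+1` elements of `A` vanish), then for every left
ideal `I` of `A`, `D` maps the closure of `I^{n+1}·X` into the closure of `I·Y`. -/
theorem stmt8 {A X Y : Type*} [Ring A] [Algebra ℂ A] [TopologicalSpace A]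
    [AddCommGroup X] [Module ℂ X] [Module A X] [IsScalarTower ℂ A X]
    [TopologicalSpace X] [IsTopologicalAddGroup X] [ContinuousSMul ℂ X]
    [AddCommGroup Y] [Module ℂ Y] [Module A Y] [IsScalarTower ℂ A Y]
    [TopologicalSpace Y] [IsTopologicalAddGroup Y] [ContinuousSMul ℂ Y]
    (hX₁ : ∀ a : A, Continuous fun v : X => a • v)
    (hX₂ : ∀ v : X, Continuous fun a : A => a • v)
    (hY₁ : ∀ a : A, Continuous fun w : Y => a • w)
    (hY₂ : ∀ w : Y, Continuous fun a : A => a • w)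
    (D : X → Y) (hDc : Continuous D)
    (hDadd : ∀ x y, D (x + y) = D x + D y)
    (hDsmul : ∀ (c : ℂ) (x : X), D (c • x) = c • D x)
    (n : ℕ)
    (hdiff : ∀ l : List A, l.length = n + 1 → l.foldl brkt D = 0)
    (I : Ideal A) :
    D '' closure (Submodule.span ℂ {w : X | ∃ (a : Fin (n + 1) → A) (v : X),
        (∀ i, a i ∈ I) ∧ w = (List.ofFn a).prod • v} : Set X) ⊆
      closure (Submodule.span ℂ {w : Y | ∃ a ∈ I, ∃ u : Y, w = a • u} : Set Y) := by
  set N : Submodule ℂ Y := Submodule.span ℂ {w : Y | ∃ a ∈ I, ∃ u : Y, w = a • u}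
  -- key algebraic lemma by induction on n
  have key : ∀ (m : ℕ) (D' : X → Y),
      (∀ l : List A, l.length = m + 1 → l.foldl brkt D' = 0) →
      ∀ (a : Fin (m + 1) → A), (∀ i, a i ∈ I) → ∀ v : X,
        D' ((List.ofFn a).prod • v) ∈ N := by
    intro m
    induction m with
    | zero =>
      intro D' hd a ha v
      have h0 : brkt D' (a 0) = 0 := hd [a 0] rfl
      have h1 : D' (a 0 • v) - a 0 • D' v = 0 := congrFun h0 v
      have h2 : D' (a 0 • v) = a 0 • D' v := by
        rwa [sub_eq_zero] at h1
      simp only [List.ofFn_succ, List.ofFn_zero, List.prod_cons, List.prod_nil, mul_one]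
      rw [h2]
      exact Submodule.subset_span ⟨a 0, ha 0, D' v, rfl⟩
    | succ m ih =>
      intro D' hd a ha v
      have hsplit : (List.ofFn a).prod = a 0 * (List.ofFn fun i : Fin (m + 1) => a i.succ).prod := by
        rw [List.ofFn_succ, List.prod_cons]
      set u : X := (List.ofFn fun i : Fin (m + 1) => a i.succ).prod • v with hu
      have heq : D' ((List.ofFn a).prod • v)
          = brkt D' (a 0) u + a 0 • D' u := by
        simp only [brkt, hu]
        rw [hsplit, mul_smul]
        abel
      rw [heq]
      refine N.add_mem ?_ ?_
      · exact ih (brkt D' (a 0))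
          (fun l hl => hd (a 0 :: l) (by simp [hl])) (fun i => a i.succ)
          (fun i => ha i.succ) v
      · exact Submodule.subset_span ⟨a 0, ha 0, D' u, rfl⟩
  -- D maps the span into N
  have hD0 : D 0 = 0 := by
    have := hDadd 0 0
    simp at this
    linear_combination (norm := abel) this
  have hmain : ∀ x ∈ Submodule.span ℂ {w : X | ∃ (a : Fin (n + 1) → A) (v : X),
      (∀ i, a i ∈ I) ∧ w = (List.ofFn a).prod • v}, D x ∈ N := by
    intro x hx
    induction hx using Submodule.span_induction with
    | mem w hw =>
      obtain ⟨a, v, ha, rfl⟩ := hw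
      exact key n D hdiff a ha v
    | zero => rw [hD0]; exact N.zero_mem
    | add x y _ _ hx hy => rw [hDadd]; exact N.add_mem hx hy
    | smul c x _ hx => rw [hDsmul]; exact N.smul_mem c hx
  -- conclude by continuity
  rintro _ ⟨x, hx, rfl⟩
  exact map_mem_closure hDc hx hmain
end

section
/- Let A and B be unital ℂ-algebras and φ : A → B a unital algebra homomorphism. Let q ≥ 1 and p ≥ 0 be natural numbers. If b ∈ Z^q(φ) (all q-fold iterated ring commutators [...[b, φ(a₁)], …, φ(a_q)] vanish for a₁,…,a_q ∈ A) and P : A → B is a ℂ-linear map belonging to Diff^p(φ) (all iterated commutators [...[P, a₀], …, a_p] vanish for a₀,…,a_p ∈ A), then the map x ↦ b·P(x) belongs to Diff^{q+p−1}(φ). -/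
def opbrkt {A B : Type*} [Mul A] [Mul B] [Sub B] (φ : A → B) (P : A → B) (a : A) :
    A → B := fun x => P (a * x) - φ a * P x

def ringbrkt {B : Type*} [Mul B] [Sub B] (b c : B) : B := b * c - c * b

section aux
variable {A B : Type*} [Ring A] [Algebra ℂ A] [Ring B] [Algebra ℂ B] (φ : A →ₐ[ℂ] B)

lemma stmt9_foldl_zero (l : List A) :
    l.foldl (opbrkt ⇑φ) (fun _ => (0 : B)) = fun _ => (0 : B) := by
  induction l with
  | nil => rfl
  | cons a t ih =>
    rw [List.foldl_cons, show opbrkt ⇑φ (fun _ => (0 : B)) a = fun _ => (0 : B) from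
      by funext x; simp [opbrkt], ih]

lemma stmt9_opbrkt_add (Q₁ Q₂ : A → B) (a : A) :
    opbrkt ⇑φ (fun x => Q₁ x + Q₂ x) a = fun x => opbrkt ⇑φ Q₁ a x + opbrkt ⇑φ Q₂ a x := by
  funext x; simp [opbrkt]; noncomm_ring

lemma stmt9_foldl_add (l : List A) : ∀ Q₁ Q₂ : A → B,
    l.foldl (opbrkt ⇑φ) (fun x => Q₁ x + Q₂ x)
      = fun x => l.foldl (opbrkt ⇑φ) Q₁ x + l.foldl (opbrkt ⇑φ) Q₂ x := by
  induction l with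
  | nil => intro Q₁ Q₂; rfl
  | cons a t ih =>
    intro Q₁ Q₂
    rw [List.foldl_cons, stmt9_opbrkt_add, ih, List.foldl_cons, List.foldl_cons]

lemma stmt9_key : ∀ n q p : ℕ, 1 ≤ q → q + p ≤ n →
    ∀ b : B, (∀ l : List A, l.length = q → (l.map ⇑φ).foldl ringbrkt b = 0) →
    ∀ P : A → B, (∀ l : List A, l.length = p + 1 → l.foldl (opbrkt ⇑φ) P = 0) →
    ∀ l : List A, l.length = q + p →
      l.foldl (opbrkt ⇑φ) (fun x => b * P x) = 0 := by
  intro n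
  induction n with
  | zero => intro q p hq hn; omega
  | succ n ih =>
    intro q p hq hn b hb P hP l hl
    obtain ⟨a₀, l', rfl⟩ : ∃ a t, l = a :: t := by
      cases l with
      | nil => simp at hl; omega
      | cons a t => exact ⟨a, t, rfl⟩
    have hl' : l'.length = q + p - 1 := by simp at hl; omega
    rw [List.foldl_cons]
    have hsplit : opbrkt ⇑φ (fun x => b * P x) a₀
        = fun x => (b * opbrkt ⇑φ P a₀ x) + (ringbrkt b (φ a₀) * P x) := by
      funext x; simp [opbrkt, ringbrkt]; noncomm_ring
    rw [hsplit, stmt9_foldl_add]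
    have h1 : l'.foldl (opbrkt ⇑φ) (fun x => b * opbrkt ⇑φ P a₀ x) = 0 := by
      rcases Nat.eq_zero_or_pos p with hp | hp
      · subst hp
        have h0 : opbrkt ⇑φ P a₀ = 0 := hP [a₀] rfl
        have : (fun x => b * opbrkt ⇑φ P a₀ x) = fun _ => (0 : B) := by
          funext x; rw [h0]; simp
        rw [this, stmt9_foldl_zero]; rfl
      · exact ih q (p - 1) hq (by omega) b hb (opbrkt ⇑φ P a₀)
          (fun m hm => hP (a₀ :: m) (by simp [hm]; omega)) l' (by omega)
    have h2 : l'.foldl (opbrkt ⇑φ) (fun x => ringbrkt b (φ a₀) * P x) = 0 := by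
      rcases Nat.lt_or_ge q 2 with hq2 | hq2
      · have hb0 : ringbrkt b (φ a₀) = 0 := by
          have := hb [a₀] (by simp; omega)
          simpa using this
        have : (fun x => ringbrkt b (φ a₀) * P x) = fun _ => (0 : B) := by
          funext x; rw [hb0]; simp
        rw [this, stmt9_foldl_zero]; rfl
      · exact ih (q - 1) p (by omega) (by omega) (ringbrkt b (φ a₀))
          (fun m hm => by
            have := hb (a₀ :: m) (by simp [hm]; omega)
            simpa using this) P hP l' (by omega)
    funext x
    rw [h1, h2]
    simp

end aux

/-- Let `φ : A → B` be a unital homomorphism of unital ℂ-algebras,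
`q ≥ 1` and `p ≥ 0`. If `b ∈ Z^q(φ)` (all `q`-fold iterated ring commutators of `b`
with elements `φ(aᵢ)` vanish) and the ℂ-linear map `P : A → B` lies in `Diff^p(φ)`
(all iterated commutators with `p+1` elements of `A` vanish), then
`x ↦ b·P(x)` lies in `Diff^{q+p−1}(φ)`. -/
theorem stmt9 {A B : Type*} [Ring A] [Algebra ℂ A] [Ring B] [Algebra ℂ B]
    (φ : A →ₐ[ℂ] B) (q p : ℕ) (hq : 1 ≤ q) (b : B)
    (hb : ∀ l : List A, l.length = q → (l.map ⇑φ).foldl ringbrkt b = 0)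
    (P : A → B)
    (hPadd : ∀ x y, P (x + y) = P x + P y)
    (hPsmul : ∀ (c : ℂ) (x : A), P (c • x) = c • P x)
    (hP : ∀ l : List A, l.length = p + 1 → l.foldl (opbrkt ⇑φ) P = 0) :
    ∀ l : List A, l.length = (q + p - 1) + 1 →
      l.foldl (opbrkt ⇑φ) (fun x => b * P x) = 0 := by
  intro l hl
  exact stmt9_key φ (q + p) q p hq le_rfl b hb P hP l (by omega)
end

section
/- Let A and B be unital ℂ-algebras, φ : A → B a unital algebra homomorphism, b ∈ B, and n a natural number. Then the map x ↦ b·φ(x) belongs to Diff^n(φ) if and only if b ∈ Z^{n+1}(φ); that is, for all a₀, …, a_n ∈ A the iterated commutator [...[b·φ, a₀], …, a_n] is the zero map if and only if for all a₀, …, a_n ∈ A the iterated ring commutator [...[b, φ(a₀)], …, φ(a_n)] = 0. -/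
lemma foldl_opbrkt_eq {A B : Type*} [Ring A] [Algebra ℂ A] [Ring B] [Algebra ℂ B]
    (φ : A →ₐ[ℂ] B) : ∀ (l : List A) (b : B),
    l.foldl (opbrkt ⇑φ) (fun x => b * φ x) =
      fun x => ((l.map ⇑φ).foldl ringbrkt b) * φ x := by
  intro l
  induction l with
  | nil => intro b; rfl
  | cons a t ih =>
    intro b
    have h : opbrkt ⇑φ (fun x => b * φ x) a = fun x => (ringbrkt b (φ a)) * φ x := by
      funext x
      simp [opbrkt, ringbrkt, map_mul, mul_assoc, sub_mul]
    simp only [List.foldl_cons, List.map_cons, h, ih]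

/-- Let `φ : A → B` be a unital homomorphism of unital ℂ-algebras,
`b ∈ B` and `n ∈ ℕ`. Then `x ↦ b·φ(x)` lies in `Diff^n(φ)` iff `b ∈ Z^{n+1}(φ)`:
all iterated commutators `[...[b·φ, a₀], …, a_n]` vanish iff all iterated ring
commutators `[...[b, φ(a₀)], …, φ(a_n)]` vanish. -/
theorem stmt10 {A B : Type*} [Ring A] [Algebra ℂ A] [Ring B] [Algebra ℂ B]
    (φ : A →ₐ[ℂ] B) (b : B) (n : ℕ) :
    (∀ l : List A, l.length = n + 1 →
      l.foldl (opbrkt ⇑φ) (fun x => b * φ x) = 0) ↔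
    (∀ l : List A, l.length = n + 1 → (l.map ⇑φ).foldl ringbrkt b = 0) := by
  constructor
  · intro h l hl
    have := congrFun (h l hl) 1
    rw [foldl_opbrkt_eq] at this
    simpa using this
  · intro h l hl
    rw [foldl_opbrkt_eq, h l hl]
    funext x; simp
end

section
/- Let B be a unital C*-algebra and let A be a closed star-subalgebra of B. Then the sequence of subspaces Z^n(A) stabilizes from n = 1: for every n ≥ 1, Z^n(A) = Z^{n+1}(A). Equivalently, for every b ∈ B and n ≥ 1, all n-fold iterated commutators [...[b, a₁], …, a_n] with a₁, …, a_n ∈ A vanish if and only if all (n+1)-fold iterated commutators [...[b, a₁], …, a_{n+1}] with a₁, …, a_{n+1} ∈ A vanish. -/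
open NormedSpace Complex Nat

section Aux

variable {B : Type*} [NormedRing B] [StarRing B] [CStarRing B]
    [NormedAlgebra ℂ B] [CompleteSpace B] [StarModule ℂ B]

/-- If `x` commutes with `c = b*x - x*b`, then `x^(n+1) * b = b * x^(n+1) - (n+1) • (c * x^n)`. -/
lemma pow_mul_aux (x b c : B) (hc : c = b * x - x * b) (hxc : Commute x c) :
    ∀ n : ℕ, x ^ (n + 1) * b = b * x ^ (n + 1) - ((n : ℂ) + 1) • (c * x ^ n) := by
  have hxb : x * b = b * x - c := by rw [hc]; abel
  intro n
  induction n with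
  | zero => simpa using hxb
  | succ n ih =>
    have hpc : x ^ (n + 1) * c = c * x ^ (n + 1) := (hxc.pow_left (n + 1)).eq
    have : x ^ (n + 2) * b = x ^ (n + 1) * (x * b) := by rw [← mul_assoc, ← pow_succ]
    rw [this, hxb, mul_sub, ← mul_assoc, ih, hpc, sub_mul, smul_mul_assoc,
      mul_assoc c (x ^ n) x, ← pow_succ, mul_assoc b (x ^ (n + 1)) x, ← pow_succ]
    have h2 : ((n + 1 : ℕ) : ℂ) + 1 = ((n : ℂ) + 1) + 1 := by push_cast; ring
    rw [h2]
    module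

/-- If `x` commutes with `c = b*x - x*b`, then `exp(x) * b = (b - c) * exp(x)`. -/
lemma exp_mul_aux (x b c : B) (hc : c = b * x - x * b) (hxc : Commute x c) :
    NormedSpace.exp x * b = b * NormedSpace.exp x - c * NormedSpace.exp x := by
  have hS : Summable fun n : ℕ => (n ! : ℂ)⁻¹ • x ^ n := by
    simpa using expSeries_summable' (𝕂 := ℂ) x
  have hSb : Summable fun n : ℕ => ((n ! : ℂ)⁻¹ • x ^ n) * b := hS.mul_right b
  have hbS : Summable fun n : ℕ => b * ((n ! : ℂ)⁻¹ • x ^ n) := hS.mul_left b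
  have hf : Summable fun n : ℕ =>
      b * ((n ! : ℂ)⁻¹ • x ^ n) - ((n ! : ℂ)⁻¹ • x ^ n) * b := hbS.sub hSb
  have hexp : NormedSpace.exp x = ∑' n : ℕ, (n ! : ℂ)⁻¹ • x ^ n := by
    rw [exp_eq_tsum (𝕂 := ℂ)]
  have hterm : ∀ n : ℕ,
      b * (((n + 1)! : ℂ)⁻¹ • x ^ (n + 1)) - (((n + 1)! : ℂ)⁻¹ • x ^ (n + 1)) * b
        = c * ((n ! : ℂ)⁻¹ • x ^ n) := by
    intro n
    rw [smul_mul_assoc, mul_smul_comm, ← smul_sub, pow_mul_aux x b c hc hxc n,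
      sub_sub_cancel, smul_smul, mul_smul_comm]
    congr 1
    have h1 : ((n + 1)! : ℂ) = ((n : ℂ) + 1) * (n ! : ℂ) := by
      push_cast [Nat.factorial_succ]; ring
    have hne : ((n : ℂ) + 1) ≠ 0 := Nat.cast_add_one_ne_zero n
    rw [h1, mul_inv, mul_comm (((n : ℂ) + 1))⁻¹, mul_assoc, inv_mul_cancel₀ hne, mul_one]
  have hsum_f : (∑' n : ℕ, (b * ((n ! : ℂ)⁻¹ • x ^ n) - ((n ! : ℂ)⁻¹ • x ^ n) * b)) =
      c * NormedSpace.exp x := by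
    rw [hf.tsum_eq_zero_add]
    have h0 : b * ((0! : ℂ)⁻¹ • x ^ 0) - ((0! : ℂ)⁻¹ • x ^ 0) * b = 0 := by simp
    rw [h0, zero_add, tsum_congr hterm, hS.tsum_mul_left c, hexp]
  calc NormedSpace.exp x * b = (∑' n : ℕ, (n ! : ℂ)⁻¹ • x ^ n) * b := by rw [hexp]
    _ = ∑' n : ℕ, ((n ! : ℂ)⁻¹ • x ^ n) * b := (hS.tsum_mul_right b).symm
    _ = ∑' n : ℕ, (b * ((n ! : ℂ)⁻¹ • x ^ n)
          - (b * ((n ! : ℂ)⁻¹ • x ^ n) - ((n ! : ℂ)⁻¹ • x ^ n) * b)) := by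
        congr 1; funext n; abel
    _ = b * NormedSpace.exp x - c * NormedSpace.exp x := by
        rw [hbS.tsum_sub hf, hS.tsum_mul_left b, hsum_f, hexp]

/-- Putnam-type lemma: if `a` is self-adjoint and commutes with `c = b*a - a*b`,
then `c = 0`. -/
lemma putnam_aux (a b : B) (ha : IsSelfAdjoint a) (hcomm : Commute a (b * a - a * b)) :
    b * a - a * b = 0 := by
  set c := b * a - a * b with hc
  by_contra hne
  have hcpos : 0 < ‖c‖ := norm_pos_iff.mpr hne
  have key : ∀ t : ℝ, ‖b - ((t : ℂ) * I) • c‖ = ‖b‖ := by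
    intro t
    set z : ℂ := (t : ℂ) * I with hz
    have hzskew : z ∈ skewAdjoint ℂ := by
      rw [skewAdjoint.mem_iff]
      simp [hz, Complex.ext_iff]
    set x : B := z • a with hx
    have hxskew : x ∈ skewAdjoint B := ha.smul_mem_skewAdjoint hzskew
    have hcx : z • c = b * x - x * b := by
      rw [hx, hc, mul_smul_comm, smul_mul_assoc, smul_sub]
    have hcommx : Commute x (z • c) := by
      rw [hx]
      exact (hcomm.smul_left z).smul_right z
    have hmain : NormedSpace.exp x * b = (b - z • c) * NormedSpace.exp x := by
      rw [exp_mul_aux x b (z • c) hcx hcommx, sub_mul]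
    have hu : NormedSpace.exp x ∈ unitary B := by
      let +nondep : NormedAlgebra ℚ B := .restrictScalars ℚ ℂ B
      exact exp_mem_unitary_of_mem_skewAdjoint hxskew
    have husm : NormedSpace.exp x * star (NormedSpace.exp x) = 1 := Unitary.mul_star_self_of_mem hu
    have hconj : NormedSpace.exp x * b * star (NormedSpace.exp x) = b - z • c := by
      rw [hmain, mul_assoc, husm, mul_one]
    calc ‖b - z • c‖ = ‖NormedSpace.exp x * b * star (NormedSpace.exp x)‖ := by rw [hconj]
      _ = ‖NormedSpace.exp x * b‖ := CStarRing.norm_mul_mem_unitary _ (Unitary.star_mem hu)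
      _ = ‖b‖ := CStarRing.norm_mem_unitary_mul b hu
  set t : ℝ := (2 * ‖b‖ + 1) / ‖c‖ with ht
  have htnn : 0 ≤ t := by positivity
  have h1 : ‖((t : ℂ) * I) • c‖ = t * ‖c‖ := by
    rw [norm_smul, norm_mul, Complex.norm_I, mul_one, Complex.norm_real, Real.norm_eq_abs,
      _root_.abs_of_nonneg htnn]
  have h2 : ‖((t : ℂ) * I) • c‖ ≤ 2 * ‖b‖ := by
    calc ‖((t : ℂ) * I) • c‖ = ‖b - (b - ((t : ℂ) * I) • c)‖ := by rw [sub_sub_cancel]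
      _ ≤ ‖b‖ + ‖b - ((t : ℂ) * I) • c‖ := norm_sub_le _ _
      _ = 2 * ‖b‖ := by rw [key t]; ring
  rw [h1, ht, div_mul_cancel₀ _ (ne_of_gt hcpos)] at h2
  linarith

/-- If all second commutators of `b` with elements of `A` vanish, then all first
commutators vanish. -/
lemma step_aux (A : StarSubalgebra ℂ B) (b : B)
    (H : ∀ a ∈ A, ∀ a' ∈ A, ringbrkt (ringbrkt b a) a' = 0) :
    ∀ a ∈ A, ringbrkt b a = 0 := by
  have hlin_add : ∀ (x y : B), ringbrkt b (x + y) = ringbrkt b x + ringbrkt b y := by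
    intro x y; simp only [ringbrkt]; noncomm_ring
  have hlin_smul : ∀ (z : ℂ) (x : B), ringbrkt b (z • x) = z • ringbrkt b x := by
    intro z x; simp only [ringbrkt, mul_smul_comm, smul_mul_assoc, smul_sub]
  have hsa : ∀ a ∈ A, IsSelfAdjoint a → ringbrkt b a = 0 := by
    intro a haA hasa
    have h2 := H a haA a haA
    simp only [ringbrkt] at h2 ⊢
    have hcomm : Commute a (b * a - a * b) := by
      have := sub_eq_zero.mp h2
      exact (Commute.eq this).symm
    exact putnam_aux a b hasa hcomm
  intro a haA
  set a₁ : B := (2⁻¹ : ℂ) • (a + star a) with ha₁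
  set a₂ : B := (-(I / 2)) • (a - star a) with ha₂
  have ha₁A : a₁ ∈ A := A.smul_mem (add_mem haA (star_mem haA)) _
  have ha₂A : a₂ ∈ A := A.smul_mem (sub_mem haA (star_mem haA)) _
  have ha₁sa : IsSelfAdjoint a₁ := by
    rw [IsSelfAdjoint, ha₁, star_smul, star_add, star_star, add_comm]
    congr 1
    norm_num [Complex.ext_iff]
  have ha₂sa : IsSelfAdjoint a₂ := by
    rw [IsSelfAdjoint, ha₂, star_smul, star_sub, star_star]
    rw [show star (-(I / 2)) = I / 2 by norm_num [Complex.ext_iff]]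
    rw [show (star a - a : B) = -(a - star a) by abel]
    rw [smul_neg, ← neg_smul, neg_div' 2 I]
  have hdecomp : a = a₁ + I • a₂ := by
    rw [ha₁, ha₂, smul_smul]
    rw [show I * -(I / 2) = (2⁻¹ : ℂ) by norm_num [Complex.ext_iff]]
    module
  rw [hdecomp, hlin_add, hsa a₁ ha₁A ha₁sa, hlin_smul, hsa a₂ ha₂A ha₂sa, smul_zero, zero_add]

/-- The backward (hard) direction, by induction: if all `(n+1)`-fold commutators
vanish then all `n`-fold commutators vanish, for `n ≥ 1`. -/
lemma back_aux (A : StarSubalgebra ℂ B) :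
    ∀ n : ℕ, 1 ≤ n → ∀ b : B,
      (∀ l : List B, l.length = n + 1 → (∀ a ∈ l, a ∈ A) → l.foldl ringbrkt b = 0) →
      (∀ l : List B, l.length = n → (∀ a ∈ l, a ∈ A) → l.foldl ringbrkt b = 0) := by
  intro n
  induction n with
  | zero => intro h; exact absurd h (by norm_num)
  | succ m ih =>
    intro _ b H l hl hmem
    cases m with
    | zero =>
      obtain ⟨a, rfl⟩ := List.length_eq_one_iff.mp hl
      have haA : a ∈ A := hmem a (List.mem_singleton_self a)
      have : ∀ a' ∈ A, ∀ a'' ∈ A, ringbrkt (ringbrkt b a') a'' = 0 := by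
        intro a' h' a'' h''
        have := H [a', a''] (by simp) (by
          intro x hx
          simp only [List.mem_cons, List.mem_singleton] at hx
          rcases hx with rfl | rfl | h
          · exact h'
          · exact h''
          · exact absurd h List.not_mem_nil)
        simpa [List.foldl] using this
      simpa [List.foldl] using step_aux A b this a haA
    | succ k =>
      cases l with
      | nil => simp at hl
      | cons a t =>
        have haA : a ∈ A := hmem a (List.mem_cons_self)
        have htlen : t.length = k + 1 := by simpa using hl
        have htmem : ∀ x ∈ t, x ∈ A := fun x hx => hmem x (List.mem_cons_of_mem a hx)
        have Hcons : ∀ l' : List B, l'.length = k + 1 + 1 → (∀ x ∈ l', x ∈ A) →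
            l'.foldl ringbrkt (ringbrkt b a) = 0 := by
          intro l' hl' hmem'
          have := H (a :: l') (by simpa using hl') (by
            intro x hx
            rcases List.mem_cons.mp hx with rfl | hx
            · exact haA
            · exact hmem' x hx)
          simpa [List.foldl] using this
        have := ih (Nat.succ_le_succ (Nat.zero_le k)) (ringbrkt b a) Hcons t htlen htmem
        simpa [List.foldl] using this

end Aux

/-- Let `B` be a unital C*-algebra and `A` a closed star-subalgebra
of `B`. Then the sequence `Z^n(A)` stabilizes from `n = 1`: for `b ∈ B` and `n ≥ 1`,
all `n`-fold iterated commutators of `b` with elements of `A` vanish iff all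
`(n+1)`-fold iterated commutators vanish. -/
theorem stmt11 {B : Type*} [NormedRing B] [StarRing B] [CStarRing B]
    [NormedAlgebra ℂ B] [CompleteSpace B] [StarModule ℂ B]
    (A : StarSubalgebra ℂ B) (hA : IsClosed (A : Set B))
    (b : B) (n : ℕ) (hn : 1 ≤ n) :
    (∀ l : List B, l.length = n → (∀ a ∈ l, a ∈ A) → l.foldl ringbrkt b = 0) ↔
    (∀ l : List B, l.length = n + 1 → (∀ a ∈ l, a ∈ A) → l.foldl ringbrkt b = 0) := by
  constructor
  · intro H l hl hmem
    have hne : l ≠ [] := by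
      intro h; rw [h] at hl; simp at hl
    have hdec : l.dropLast ++ [l.getLast hne] = l := List.dropLast_append_getLast hne
    rw [← hdec, List.foldl_append]
    have hdl : l.dropLast.length = n := by
      rw [List.length_dropLast, hl]; omega
    have hdmem : ∀ a ∈ l.dropLast, a ∈ A := fun a ha => hmem a (List.dropLast_subset l ha)
    rw [H l.dropLast hdl hdmem]
    simp [ringbrkt]
  · exact back_aux A n hn b
end

section
/- Let A be a star ℂ-algebra, B a unital C*-algebra, and φ : A → B a star algebra homomorphism. Then the sequence of subspaces Z^n(φ) stabilizes from n = 1: for every n ≥ 1, Z^n(φ) = Z^{n+1}(φ). Equivalently, for every b ∈ B and n ≥ 1, all n-fold iterated commutators [...[b, φ(a₁)], …, φ(a_n)] with a₁, …, a_n ∈ A vanish if and only if all (n+1)-fold iterated commutators with n+1 elements vanish. -/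
open NormedSpace

lemma expComm {B : Type*} [NormedRing B] [NormedAlgebra ℂ B] [CompleteSpace B]
    (b x : B) (h : x * (b * x - x * b) = (b * x - x * b) * x) :
    b * exp x = exp x * b + exp x * (b * x - x * b) := by
  set c := b * x - x * b with hc
  have hbx : b * x = x * b + c := by rw [hc]; abel
  have hpow : ∀ n : ℕ, b * x ^ (n + 1) = x ^ (n + 1) * b + ((n : ℂ) + 1) • (x ^ n * c) := by
    intro n
    induction n with
    | zero => simp [hc]
    | succ n ih =>
      have e : b * x ^ (n + 1 + 1) = (b * x ^ (n + 1)) * x := by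
        rw [pow_succ, ← mul_assoc]
      rw [e, ih, add_mul, smul_mul_assoc]
      have key1 : x ^ n * c * x = x ^ (n + 1) * c := by
        rw [mul_assoc, ← h, ← mul_assoc, ← pow_succ]
      have key2 : x ^ (n + 1) * b * x = x ^ (n + 1 + 1) * b + x ^ (n + 1) * c := by
        rw [mul_assoc, hbx, mul_add, ← mul_assoc, ← pow_succ]
      rw [key1, key2]
      push_cast
      module
  have sum_h : Summable fun n : ℕ => (Nat.factorial n : ℂ)⁻¹ • (x ^ n * c) := by
    have := (expSeries_summable' (𝕂 := ℂ) x).mul_right c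
    simpa [smul_mul_assoc] using this
  have sum_f : Summable fun n : ℕ => (Nat.factorial n : ℂ)⁻¹ • (b * x ^ n) := by
    have := (expSeries_summable' (𝕂 := ℂ) x).mul_left b
    simpa [mul_smul_comm] using this
  have sum_g : Summable fun n : ℕ => (Nat.factorial n : ℂ)⁻¹ • (x ^ n * b) := by
    have := (expSeries_summable' (𝕂 := ℂ) x).mul_right b
    simpa [smul_mul_assoc] using this
  have hexp : exp x = ∑' n : ℕ, (Nat.factorial n : ℂ)⁻¹ • x ^ n := by
    rw [exp_eq_tsum ℂ]
  have e1 : b * exp x = ∑' n : ℕ, (Nat.factorial n : ℂ)⁻¹ • (b * x ^ n) := by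
    rw [hexp, ← (expSeries_summable' (𝕂 := ℂ) x).tsum_mul_left b]
    simp_rw [mul_smul_comm]
  have e2 : exp x * b = ∑' n : ℕ, (Nat.factorial n : ℂ)⁻¹ • (x ^ n * b) := by
    rw [hexp, ← (expSeries_summable' (𝕂 := ℂ) x).tsum_mul_right b]
    simp_rw [smul_mul_assoc]
  have e3 : exp x * c = ∑' n : ℕ, (Nat.factorial n : ℂ)⁻¹ • (x ^ n * c) := by
    rw [hexp, ← (expSeries_summable' (𝕂 := ℂ) x).tsum_mul_right c]
    simp_rw [smul_mul_assoc]
  set F : ℕ → B := fun n =>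
    (Nat.factorial n : ℂ)⁻¹ • (b * x ^ n) - (Nat.factorial n : ℂ)⁻¹ • (x ^ n * b) with hF
  have hF0 : F 0 = 0 := by simp [hF]
  have hFs : ∀ n : ℕ, F (n + 1) = (Nat.factorial n : ℂ)⁻¹ • (x ^ n * c) := by
    intro n
    rw [hF]
    simp only
    rw [hpow n, ← smul_sub]
    have e : x ^ (n + 1) * b + ((n : ℂ) + 1) • (x ^ n * c) - x ^ (n + 1) * b
        = ((n : ℂ) + 1) • (x ^ n * c) := by abel
    rw [e, smul_smul]
    congr 1
    rw [Nat.factorial_succ]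
    push_cast
    have hn : ((n : ℂ) + 1) ≠ 0 := Nat.cast_add_one_ne_zero n
    have hfac : (Nat.factorial n : ℂ) ≠ 0 := Nat.cast_ne_zero.mpr (Nat.factorial_ne_zero n)
    field_simp
  have sumF : Summable F := by
    rw [← summable_nat_add_iff 1]
    simpa [hFs] using sum_h
  have hFeq : ∑' n, F n = exp x * c := by
    rw [Summable.tsum_eq_zero_add sumF, hF0, zero_add, e3]
    exact tsum_congr fun n => hFs n
  have hsub : b * exp x - exp x * b = ∑' n, F n := by
    rw [e1, e2, hF, ← Summable.tsum_sub sum_f sum_g]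
  rw [hFeq] at hsub
  linear_combination (norm := abel) hsub

lemma keyCstar {B : Type*} [NormedRing B] [StarRing B] [CStarRing B] [NormedAlgebra ℂ B]
    [CompleteSpace B] [StarModule ℂ B]
    (b s : B) (hs : IsSelfAdjoint s)
    (h : s * (b * s - s * b) = (b * s - s * b) * s) :
    b * s - s * b = 0 := by
  set c := b * s - s * b with hc
  have hbound : ∀ t : ℝ, t * ‖c‖ ≤ 2 * ‖b‖ := by
    intro t
    set α : ℂ := (t : ℂ) * Complex.I with hα
    set x : B := α • s with hx
    have hcomm : x * (b * x - x * b) = (b * x - x * b) * x := by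
      have e1 : b * x - x * b = α • c := by
        rw [hx, hc, mul_smul_comm, smul_mul_assoc, smul_sub]
      rw [e1, hx, smul_mul_assoc, mul_smul_comm, smul_mul_assoc, mul_smul_comm, h]
    have hskew : x ∈ skewAdjoint B := by
      rw [skewAdjoint.mem_iff, hx, star_smul, hs.star_eq]
      rw [← neg_smul]
      congr 1
      simp [hα, Complex.ext_iff]
    have hu : exp x ∈ unitary B := by
      let +nondep : NormedAlgebra ℚ B := .restrictScalars ℚ ℂ B
      exact exp_mem_unitary_of_mem_skewAdjoint hskew
    set u : unitary B := ⟨exp x, hu⟩ with hudef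
    have hxc : b * x - x * b = α • c := by
      rw [hx, hc, mul_smul_comm, smul_mul_assoc, smul_sub]
    have hmain : b * (u : B) = (u : B) * (b + α • c) := by
      have := expComm b x hcomm
      rw [hxc] at this
      rw [hudef]
      simpa [mul_add] using this
    have hconj : b + α • c = (star u : B) * (b * (u : B)) := by
      rw [hmain, ← mul_assoc]
      have : (star u : B) * (u : B) = 1 := Unitary.coe_star_mul_self u
      rw [this, one_mul]
    have hnorm : ‖b + α • c‖ = ‖b‖ := by
      rw [hconj]
      rw [show (star u : B) = ((star u : unitary B) : B) from rfl]
      rw [CStarRing.norm_coe_unitary_mul (star u) (b * (u : B))]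
      exact CStarRing.norm_mul_coe_unitary b u
    have hαnorm : ‖α • c‖ = |t| * ‖c‖ := by
      rw [norm_smul, hα]
      simp
    have : ‖α • c‖ - ‖b‖ ≤ ‖b + α • c‖ := by
      have hh := norm_sub_le (b + α • c) b
      rw [add_sub_cancel_left] at hh
      linarith
    have h1 : |t| * ‖c‖ ≤ 2 * ‖b‖ := by
      rw [← hαnorm]
      linarith [this, hnorm.le, hnorm.ge]
    have h2 : t * ‖c‖ ≤ |t| * ‖c‖ :=
      mul_le_mul_of_nonneg_right (le_abs_self t) (norm_nonneg c)
    linarith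
  by_contra hne
  have hcpos : 0 < ‖c‖ := norm_pos_iff.mpr hne
  have := hbound ((2 * ‖b‖ + 1) / ‖c‖)
  rw [div_mul_cancel₀ _ (ne_of_gt hcpos)] at this
  linarith

lemma step1 {A B : Type*} [Ring A] [Algebra ℂ A] [StarRing A] [StarModule ℂ A]
    [NormedRing B] [StarRing B] [CStarRing B] [NormedAlgebra ℂ B] [CompleteSpace B]
    [StarModule ℂ B]
    (φ : A →⋆ₐ[ℂ] B) (b : B)
    (h2 : ∀ a1 a2 : A, ringbrkt (ringbrkt b (φ a1)) (φ a2) = 0) :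
    ∀ a : A, ringbrkt b (φ a) = 0 := by
  have hsa : ∀ a : A, star a = a → ringbrkt b (φ a) = 0 := by
    intro a ha
    have hs : IsSelfAdjoint (φ a) := by
      rw [IsSelfAdjoint, ← map_star, ha]
    have hcomm : φ a * (b * φ a - φ a * b) = (b * φ a - φ a * b) * φ a := by
      have h := h2 a a
      simp only [ringbrkt] at h
      have := sub_eq_zero.mp h
      exact this.symm
    exact keyCstar b (φ a) hs hcomm
  intro a
  set x : A := (2⁻¹ : ℂ) • (a + star a) with hxdef
  set y : A := ((2⁻¹ : ℂ) * (-Complex.I)) • (a - star a) with hydef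
  have hxsa : star x = x := by
    rw [hxdef, star_smul, star_add, star_star]
    have h1 : star (2⁻¹ : ℂ) = (2⁻¹ : ℂ) := by
      rw [Complex.star_def, map_inv₀]
      norm_num [Complex.conj_ofNat]
    rw [h1, add_comm]
  have hysa : star y = y := by
    rw [hydef, star_smul, star_sub, star_star]
    rw [show star a - a = -(a - star a) from (neg_sub a (star a)).symm]
    rw [smul_neg, ← neg_smul]
    congr 1
    rw [Complex.star_def]
    simp [Complex.ext_iff]
  have hdecomp : a = x + Complex.I • y := by
    rw [hxdef, hydef, smul_smul]
    rw [show Complex.I * (2⁻¹ * -Complex.I) = (2⁻¹ : ℂ) from by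
      linear_combination (-(2⁻¹ : ℂ)) * Complex.I_mul_I]
    module
  have hφ : φ a = φ x + Complex.I • φ y := by
    conv_lhs => rw [hdecomp]
    rw [map_add, map_smul φ Complex.I y]
  have hlin : ∀ u v : B, ∀ α : ℂ, ringbrkt b (u + α • v)
      = ringbrkt b u + α • ringbrkt b v := by
    intro u v α
    simp only [ringbrkt, mul_add, add_mul, mul_smul_comm, smul_mul_assoc, smul_sub]
    abel
  rw [hφ, hlin, hsa x hxsa, hsa y hysa, smul_zero, add_zero]

lemma fold_cons {A B : Type*} [Ring A] [Algebra ℂ A] [StarRing A] [StarModule ℂ A]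
    [NormedRing B] [StarRing B] [CStarRing B] [NormedAlgebra ℂ B] [CompleteSpace B]
    [StarModule ℂ B]
    (φ : A →⋆ₐ[ℂ] B) (b : B) (a : A) (l : List A) :
    ((a :: l).map ⇑φ).foldl ringbrkt b = (l.map ⇑φ).foldl ringbrkt (ringbrkt b (φ a)) := by
  simp [List.map_cons, List.foldl_cons]

lemma backStep {A B : Type*} [Ring A] [Algebra ℂ A] [StarRing A] [StarModule ℂ A]
    [NormedRing B] [StarRing B] [CStarRing B] [NormedAlgebra ℂ B] [CompleteSpace B]
    [StarModule ℂ B]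
    (φ : A →⋆ₐ[ℂ] B) : ∀ n : ℕ, ∀ b : B,
    (∀ l : List A, l.length = n + 2 → (l.map ⇑φ).foldl ringbrkt b = 0) →
    ∀ l : List A, l.length = n + 1 → (l.map ⇑φ).foldl ringbrkt b = 0 := by
  intro n
  induction n with
  | zero =>
    intro b H l hl
    match l, hl with
    | [a], _ =>
      have h2 : ∀ a1 a2 : A, ringbrkt (ringbrkt b (φ a1)) (φ a2) = 0 := by
        intro a1 a2
        have := H [a1, a2] rfl
        simpa [List.foldl] using this
      simpa [List.foldl] using step1 φ b h2 a
  | succ n ih =>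
    intro b H l hl
    match l, hl with
    | a :: t, hl =>
      have ht : t.length = n + 1 := by
        simpa using hl
      rw [fold_cons]
      apply ih (ringbrkt b (φ a)) _ t ht
      intro m hm
      rw [← fold_cons]
      exact H (a :: m) (by simpa using hm)

/-- Let `A` be a star ℂ-algebra, `B` a unital C*-algebra, and
`φ : A → B` a star algebra homomorphism. Then the sequence `Z^n(φ)` stabilizes from
`n = 1`: for `b ∈ B` and `n ≥ 1`, all `n`-fold iterated commutators of `b` with
elements `φ(aᵢ)` vanish iff all `(n+1)`-fold iterated commutators vanish. -/
theorem stmt12 {A B : Type*} [Ring A] [Algebra ℂ A] [StarRing A] [StarModule ℂ A]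
    [NormedRing B] [StarRing B] [CStarRing B] [NormedAlgebra ℂ B] [CompleteSpace B]
    [StarModule ℂ B]
    (φ : A →⋆ₐ[ℂ] B) (b : B) (n : ℕ) (hn : 1 ≤ n) :
    (∀ l : List A, l.length = n → (l.map ⇑φ).foldl ringbrkt b = 0) ↔
    (∀ l : List A, l.length = n + 1 → (l.map ⇑φ).foldl ringbrkt b = 0) := by
  obtain ⟨m, rfl⟩ : ∃ m, n = m + 1 := ⟨n - 1, (Nat.succ_pred_eq_of_pos hn).symm⟩
  constructor
  · intro H l hl
    have hne : l ≠ [] := by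
      intro h
      rw [h] at hl
      simp at hl
    have hsplit : l = l.dropLast ++ [l.getLast hne] := (List.dropLast_append_getLast hne).symm
    rw [hsplit, List.map_append, List.foldl_append]
    have hlen : l.dropLast.length = m + 1 := by
      rw [List.length_dropLast, hl]
      rfl
    rw [H l.dropLast hlen]
    simp [ringbrkt, List.foldl]
  · exact backStep φ m b
end

section
/- Let A be a unital star ℂ-algebra, B a unital C*-algebra, m a natural number, and (D_k)_{k ∈ ℕ^m} a system of partial derivatives from A to B. Then the following are equivalent: (i) for every k, D_k is a differential operator of order at most |k| relative to the homomorphism D₀, i.e. for all a₀, …, a_{|k|} ∈ A the iterated commutator [...[D_k, a₀], …, a_{|k|}] vanishes, where [P, a](x) = P(a·x) − D₀(a)·P(x) and |k| = k₁ + ⋯ + k_m; (ii) for every multi-index k ≠ 0, the range of D_k lies in Z^{|k|}(D₀), i.e. for all a ∈ A and all a₁, …, a_{|k|} ∈ A the iterated ring commutator [...[D_k(a), D₀(a₁)], …, D₀(a_{|k|})] = 0; (iii) for every multi-index k ≠ 0, the range of D_k commutes with D₀(A): D_k(a)·D₀(a') = D₀(a')·D_k(a) for all a, a' ∈ A. 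-/
open scoped Nat in
open NormedSpace in
lemma ks_core {B : Type*} [NormedRing B] [StarRing B] [CStarRing B] [NormedAlgebra ℂ B]
    [CompleteSpace B] [StarModule ℂ B] {b c : B} (hc : star c = c)
    (h : (b * c - c * b) * c = c * (b * c - c * b)) : b * c - c * b = 0 := by
  rcases subsingleton_or_nontrivial B with hB | hB
  · exact Subsingleton.elim _ _
  set d := b * c - c * b with hd
  have hcd : c * d = d * c := h.symm
  have hcb : c * b = b * c - d := by rw [hd]; abel
  have hpow : ∀ j : ℕ, c ^ (j + 1) * b = b * c ^ (j + 1) - ((j : ℂ) + 1) • (d * c ^ j) := by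
    intro j
    induction j with
    | zero =>
      simp only [pow_one, pow_zero, Nat.cast_zero, zero_add, one_smul, mul_one]
      rw [hcb]
    | succ j ih =>
      have h1 : c ^ (j + 1 + 1) * b = c * (c ^ (j + 1) * b) := by
        rw [← mul_assoc, ← pow_succ']
      rw [h1, ih, mul_sub, mul_smul_comm, ← mul_assoc, ← mul_assoc, hcb, hcd, sub_mul]
      have e1 : b * c * c ^ (j + 1) = b * c ^ (j + 1 + 1) := by rw [mul_assoc, ← pow_succ']
      have e2 : d * c * c ^ j = d * c ^ (j + 1) := by rw [mul_assoc, ← pow_succ']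
      rw [e1, e2]
      push_cast
      rw [show ((j : ℂ) + 1 + 1) • (d * c ^ (j + 1))
          = d * c ^ (j + 1) + ((j : ℂ) + 1) • (d * c ^ (j + 1)) by rw [add_smul, one_smul]; abel]
      abel
  have key : ∀ z : ℂ, exp (z • c) * b = b * exp (z • c) - z • (d * exp (z • c)) := by
    intro z
    have hf : Summable (fun n : ℕ => (n !⁻¹ : ℂ) • (z • c) ^ n) :=
      expSeries_summable' (𝕂 := ℂ) (z • c)
    set f : ℕ → B := fun n => (n !⁻¹ : ℂ) • (z • c) ^ n with hfdef
    let g : ℕ → B := fun n => match n with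
      | 0 => 0
      | (j + 1) => f j
    have hg : Summable g := by
      refine (summable_nat_add_iff 1).mp ?_
      exact hf
    have hterm : ∀ n : ℕ, f n * b = b * f n - z • (d * g n) := by
      intro n
      match n with
      | 0 => simp [hfdef, g]
      | (j + 1) =>
        show f (j+1) * b = b * f (j+1) - z • (d * f j)
        simp only [hfdef, smul_mul_assoc, mul_smul_comm, smul_pow, smul_smul, hpow j, smul_sub]
        match_scalars
        · ring
        · have h2 : ((j ! : ℂ)) ≠ 0 := Nat.cast_ne_zero.mpr j.factorial_ne_zero
          have h1 : ((j:ℂ) + 1) ≠ 0 := Nat.cast_add_one_ne_zero j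
          rw [Nat.factorial_succ]
          push_cast
          field_simp
          ring
    calc exp (z • c) * b = (∑' n, f n) * b := by rw [exp_eq_tsum ℂ]
      _ = ∑' n, f n * b := (hf.tsum_mul_right b).symm
      _ = ∑' n, (b * f n - z • (d * g n)) := tsum_congr hterm
      _ = (∑' n, b * f n) - ∑' n, z • (d * g n) :=
          Summable.tsum_sub (hf.mul_left b) (((hg.mul_left d).const_smul z))
      _ = b * (∑' n, f n) - z • (d * ∑' n, g n) := by
          have e1 : ∑' n, b * f n = b * ∑' n, f n := hf.tsum_mul_left b
          have e2 : ∑' n, z • (d * g n) = z • (d * ∑' n, g n) := by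
            rw [Summable.tsum_const_smul z (hg.mul_left d), hg.tsum_mul_left d]
          rw [e1, e2]
      _ = b * exp (z • c) - z • (d * exp (z • c)) := by
          have e3 : ∑' n, g n = ∑' n, f n := by
            rw [Summable.tsum_eq_zero_add hg]
            show (0:B) + ∑' n, f n = ∑' n, f n
            rw [zero_add]
          rw [e3, exp_eq_tsum ℂ]
  have hbound : ∀ t : ℝ, ‖((t:ℂ) * Complex.I) • d‖ ≤ 2 * ‖b‖ := by
    intro t
    set z : ℂ := (t:ℂ) * Complex.I with hz
    set u : B := exp (z • c) with hu
    have hstarzc : star (z • c) = -(z • c) := by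
      rw [star_smul, hc, ← neg_smul]
      congr 1
      simp [hz, Complex.ext_iff]
    have hstaru : star u = exp (-(z • c)) := by
      rw [hu, star_exp, hstarzc]
    have h1 : u * star u = 1 := by
      letI : NormedAlgebra ℚ B := .restrictScalars ℚ ℂ B
      rw [hstaru, hu, ← exp_add_of_commute ((Commute.refl (z • c)).neg_right),
        add_neg_cancel, exp_zero]
    have h2 : star u * u = 1 := by
      letI : NormedAlgebra ℚ B := .restrictScalars ℚ ℂ B
      rw [hstaru, hu, ← exp_add_of_commute ((Commute.refl (z • c)).neg_left),
        neg_add_cancel, exp_zero]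
    have hnu : ‖u‖ = 1 := by
      have := CStarRing.norm_star_mul_self (x := u)
      rw [h2, CStarRing.norm_one] at this
      nlinarith [norm_nonneg u]
    have hnsu : ‖star u‖ = 1 := by rw [norm_star, hnu]
    have hconj : u * b * star u = b - z • d := by
      rw [key z, sub_mul, smul_mul_assoc, mul_assoc, mul_assoc, h1, mul_one, mul_one]
    have hle : ‖b - z • d‖ ≤ ‖b‖ := by
      rw [← hconj]
      calc ‖u * b * star u‖ ≤ ‖u * b‖ * ‖star u‖ := norm_mul_le _ _
        _ ≤ ‖u‖ * ‖b‖ * ‖star u‖ := by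
            have := norm_mul_le u b
            nlinarith [norm_nonneg (u*b), norm_nonneg (star u)]
        _ = ‖b‖ := by rw [hnu, hnsu]; ring
    calc ‖z • d‖ = ‖b - (b - z • d)‖ := by congr 1; abel
      _ ≤ ‖b‖ + ‖b - z • d‖ := norm_sub_le _ _
      _ ≤ 2 * ‖b‖ := by linarith
  have hdnorm : ‖d‖ = 0 := by
    by_contra hne
    have hpos : 0 < ‖d‖ := lt_of_le_of_ne (norm_nonneg d) (Ne.symm hne)
    set t : ℝ := (2 * ‖b‖ + 1) / ‖d‖ with ht
    have := hbound t
    rw [norm_smul] at this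
    have hzn : ‖(t:ℂ) * Complex.I‖ = |t| := by
      rw [norm_mul, Complex.norm_I, mul_one, Complex.norm_real, Real.norm_eq_abs]
    rw [hzn] at this
    have htpos : 0 ≤ t := by positivity
    rw [abs_of_nonneg htpos] at this
    rw [ht, div_mul_cancel₀ _ (ne_of_gt hpos)] at this
    linarith
  exact norm_eq_zero.mp hdnorm

lemma foldl_ringbrkt_zero {B : Type*} [NonUnitalNonAssocRing B] (l : List B) :
    l.foldl ringbrkt 0 = 0 := by
  induction l with
  | nil => rfl
  | cons c t ih =>
    rw [List.foldl_cons, show ringbrkt (0 : B) c = 0 by simp [ringbrkt]]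
    exact ih

lemma ks_chain {B : Type*} [NormedRing B] [StarRing B] [CStarRing B] [NormedAlgebra ℂ B]
    [CompleteSpace B] [StarModule ℂ B] {b c : B} (hc : star c = c) :
    ∀ n : ℕ, (List.replicate (n + 1) c).foldl ringbrkt b = 0 → b * c = c * b := by
  intro n
  induction n generalizing b with
  | zero =>
    intro h
    have : ringbrkt b c = 0 := h
    rw [ringbrkt] at this
    exact sub_eq_zero.mp this
  | succ n ih =>
    intro h
    have hsplit : (List.replicate (n + 2) c) = List.replicate n c ++ [c, c] := by
      rw [show n + 2 = n + 1 + 1 from rfl, List.replicate_succ' (n := n+1),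
        List.replicate_succ' (n := n), List.append_assoc]
      rfl
    rw [hsplit, List.foldl_append] at h
    have h2 : ringbrkt (ringbrkt ((List.replicate n c).foldl ringbrkt b) c) c = 0 := h
    set b' := (List.replicate n c).foldl ringbrkt b with hb'
    have h3 : (b' * c - c * b') * c = c * (b' * c - c * b') := by
      have h2' := h2
      simp only [ringbrkt] at h2'
      exact sub_eq_zero.mp h2' 
    have h4 : b' * c - c * b' = 0 := ks_core hc h3
    apply ih
    rw [List.replicate_succ' (n := n), List.foldl_append]
    simpa [ringbrkt] using h4

lemma comm_of_selfadj_nested {B : Type*} [NormedRing B] [StarRing B] [CStarRing B]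
    [NormedAlgebra ℂ B] [CompleteSpace B] [StarModule ℂ B] {b c : B} (hc : star c = c)
    {n : ℕ} (hn : 1 ≤ n) (h : (List.replicate n c).foldl ringbrkt b = 0) : b * c = c * b := by
  obtain ⟨j, rfl⟩ : ∃ j, n = j + 1 := ⟨n - 1, by omega⟩
  exact ks_chain hc j h

/-- Let `A` be a unital star ℂ-algebra, `B` a unital C*-algebra,
and `(D_k)_{k ∈ ℕ^m}` a system of partial derivatives from `A` to `B`. Then the
following are equivalent: (i) every `D_k` is a differential operator of order at most
`|k|` relative to `D₀`; (ii) for every `k ≠ 0` the range of `D_k` lies in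
`Z^{|k|}(D₀)`; (iii) for every `k ≠ 0` the range of `D_k` commutes with `D₀(A)`. -/
theorem stmt17 {A B : Type*} [Ring A] [Algebra ℂ A] [StarRing A] [StarModule ℂ A]
    [NormedRing B] [StarRing B] [CStarRing B] [NormedAlgebra ℂ B] [CompleteSpace B]
    [StarModule ℂ B]
    (m : ℕ) (Dk : (Fin m →₀ ℕ) → A → B)
    (hadd : ∀ (k : Fin m →₀ ℕ) (a b : A), Dk k (a + b) = Dk k a + Dk k b)
    (hsmul : ∀ (k : Fin m →₀ ℕ) (c : ℂ) (a : A), Dk k (c • a) = c • Dk k a)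
    (hstar : ∀ (k : Fin m →₀ ℕ) (a : A), Dk k (star a) = star (Dk k a))
    (hone : Dk 0 1 = 1)
    (hone' : ∀ k : Fin m →₀ ℕ, k ≠ 0 → Dk k 1 = 0)
    (hmul : ∀ (k : Fin m →₀ ℕ) (a b : A),
      Dk k (a * b) = ∑ l ∈ Finset.Iic k, Dk (k - l) a * Dk l b) :
    -- (i) ↔ (ii)
    ((∀ k : Fin m →₀ ℕ, ∀ l : List A, l.length = (∑ i, k i) + 1 →
        l.foldl (opbrkt (Dk 0)) (Dk k) = 0) ↔
     (∀ k : Fin m →₀ ℕ, k ≠ 0 → ∀ a : A, ∀ l : List A, l.length = (∑ i, k i) →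
        (l.map (Dk 0)).foldl ringbrkt (Dk k a) = 0)) ∧
    -- (ii) ↔ (iii)
    ((∀ k : Fin m →₀ ℕ, k ≠ 0 → ∀ a : A, ∀ l : List A, l.length = (∑ i, k i) →
        (l.map (Dk 0)).foldl ringbrkt (Dk k a) = 0) ↔
     (∀ k : Fin m →₀ ℕ, k ≠ 0 → ∀ a a' : A,
        Dk k a * Dk 0 a' = Dk 0 a' * Dk k a)) := by
  -- degree lemmas
  have hdeg_pos : ∀ k : Fin m →₀ ℕ, k ≠ 0 → 1 ≤ ∑ i, k i := by
    intro k hk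
    rw [Nat.one_le_iff_ne_zero]
    intro h0
    apply hk
    ext i
    exact Finset.sum_eq_zero_iff.mp h0 i (Finset.mem_univ _)
  have hdeg_mono : ∀ {l k : Fin m →₀ ℕ}, l ≤ k → (∑ i, l i) ≤ ∑ i, k i := by
    intro l k h
    exact Finset.sum_le_sum fun i _ => Finsupp.le_def.mp h i
  have hdeg_lt : ∀ {l k : Fin m →₀ ℕ}, l ≤ k → l ≠ k → (∑ i, l i) < ∑ i, k i := by
    intro l k h hne
    obtain ⟨i, hi⟩ : ∃ i, l i ≠ k i := by
      by_contra hcon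
      push_neg at hcon
      exact hne (Finsupp.ext hcon)
    exact Finset.sum_lt_sum (fun i _ => Finsupp.le_def.mp h i)
      ⟨i, Finset.mem_univ _, lt_of_le_of_ne (Finsupp.le_def.mp h i) hi⟩
  have hsub_ne : ∀ {l k : Fin m →₀ ℕ}, l ≤ k → l ≠ k → k - l ≠ 0 := by
    intro l k h hne hcon
    exact hne (le_antisymm h (tsub_eq_zero_iff_le.mp hcon))
  have hdeg_sub_lt : ∀ {l k : Fin m →₀ ℕ}, l ≤ k → l ≠ 0 → (∑ i, (k - l) i) < ∑ i, k i := by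
    intro l k h hl0
    obtain ⟨i, hi⟩ : ∃ i, l i ≠ 0 := by
      by_contra hcon
      push_neg at hcon
      exact hl0 (Finsupp.ext hcon)
    refine Finset.sum_lt_sum (fun i _ => ?_) ⟨i, Finset.mem_univ _, ?_⟩
    · rw [Finsupp.tsub_apply]; exact Nat.sub_le _ _
    · rw [Finsupp.tsub_apply]
      have h1 : 1 ≤ l i := Nat.one_le_iff_ne_zero.mpr hi
      have h2 : 1 ≤ k i := le_trans h1 (Finsupp.le_def.mp h i)
      omega
  -- D0 multiplicative
  have hIic0 : Finset.Iic (0 : Fin m →₀ ℕ) = {0} := by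
    ext l; simp [Finset.mem_Iic, le_zero_iff]
  have hmul0 : ∀ a b : A, Dk 0 (a * b) = Dk 0 a * Dk 0 b := by
    intro a b
    rw [hmul, hIic0, Finset.sum_singleton, tsub_zero]
  -- bracket formula
  have hbracket : ∀ (k : Fin m →₀ ℕ) (a : A), opbrkt (Dk 0) (Dk k) a
      = fun x => ∑ l ∈ (Finset.Iic k).erase k, Dk (k - l) a * Dk l x := by
    intro k a
    funext x
    show Dk k (a * x) - Dk 0 a * Dk k x = _
    rw [hmul, ← Finset.add_sum_erase _ _ (Finset.mem_Iic.mpr (le_refl k)), tsub_self,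
      add_sub_cancel_left]
  -- fold linearity
  have hfoldadd : ∀ (t : List A) (P Q : A → B),
      t.foldl (opbrkt (Dk 0)) (fun x => P x + Q x)
        = fun x => t.foldl (opbrkt (Dk 0)) P x + t.foldl (opbrkt (Dk 0)) Q x := by
    intro t
    induction t with
    | nil => intro P Q; rfl
    | cons a t ih =>
      intro P Q
      rw [List.foldl_cons, List.foldl_cons, List.foldl_cons,
        show opbrkt (Dk 0) (fun x => P x + Q x) a
          = fun x => opbrkt (Dk 0) P a x + opbrkt (Dk 0) Q a x by
            funext x; simp only [opbrkt]; rw [mul_add]; abel]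
      exact ih _ _
  have hfoldzero : ∀ (t : List A),
      t.foldl (opbrkt (Dk 0)) (fun _ => (0 : B)) = fun _ => 0 := by
    intro t
    induction t with
    | nil => rfl
    | cons a t ih =>
      rw [List.foldl_cons,
        show opbrkt (Dk 0) (fun _ => (0:B)) a = fun _ => (0:B) by
          funext x; simp [opbrkt]]
      exact ih
  have hfoldsum : ∀ (t : List A) (s : Finset (Fin m →₀ ℕ)) (F : (Fin m →₀ ℕ) → A → B),
      t.foldl (opbrkt (Dk 0)) (fun x => ∑ l ∈ s, F l x)
        = fun x => ∑ l ∈ s, t.foldl (opbrkt (Dk 0)) (F l) x := by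
    intro t s F
    induction s using Finset.induction_on with
    | empty => simpa using hfoldzero t
    | insert c s' hns ih =>
      simp only [Finset.sum_insert hns]
      rw [hfoldadd t _ _, ih]
  have hfoldsmul : ∀ (t : List A) (c : B), (∀ a' : A, c * Dk 0 a' = Dk 0 a' * c) →
      ∀ (P : A → B), t.foldl (opbrkt (Dk 0)) (fun x => c * P x)
        = fun x => c * t.foldl (opbrkt (Dk 0)) P x := by
    intro t c hc
    induction t with
    | nil => intro P; rfl
    | cons a t ih =>
      intro P
      rw [List.foldl_cons, List.foldl_cons,
        show opbrkt (Dk 0) (fun x => c * P x) a = fun x => c * opbrkt (Dk 0) P a x by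
          funext x
          simp only [opbrkt]
          rw [mul_sub, ← mul_assoc, ← hc a, mul_assoc]]
      exact ih _
  -- Lemma C
  have hfoldD0 : ∀ (t : List A) (c : B),
      t.foldl (opbrkt (Dk 0)) (fun x => c * Dk 0 x)
        = fun x => ((t.map (Dk 0)).foldl ringbrkt c) * Dk 0 x := by
    intro t
    induction t with
    | nil => intro c; rfl
    | cons a t ih =>
      intro c
      rw [List.foldl_cons,
        show opbrkt (Dk 0) (fun x => c * Dk 0 x) a = fun x => (ringbrkt c (Dk 0 a)) * Dk 0 x by
          funext x
          simp only [opbrkt, ringbrkt]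
          rw [hmul0, ← mul_assoc, ← mul_assoc, sub_mul],
        List.map_cons, List.foldl_cons]
      exact ih _
  -- Lemma B'
  have hvanish : ∀ (N : ℕ),
      (∀ j : Fin m →₀ ℕ, j ≠ 0 → (∑ i, j i) ≤ N →
        ∀ a a' : A, Dk j a * Dk 0 a' = Dk 0 a' * Dk j a) →
      ∀ (t : List A) (k : Fin m →₀ ℕ), (∑ i, k i) ≤ N → (∑ i, k i) < t.length →
        t.foldl (opbrkt (Dk 0)) (Dk k) = 0 := by
    intro N hcomm t
    induction t with
    | nil => intro k _ hlen; simp at hlen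
    | cons a t ih =>
      intro k hkN hlen
      rw [List.foldl_cons, hbracket k a, hfoldsum t _ _]
      funext x
      show (∑ l ∈ (Finset.Iic k).erase k, _) = (0 : A → B) x
      rw [show (0 : A → B) x = 0 from rfl]
      apply Finset.sum_eq_zero
      intro l hl
      obtain ⟨hlk, hlIic⟩ := Finset.mem_erase.mp hl
      have hlle : l ≤ k := Finset.mem_Iic.mp hlIic
      have hckl : ∀ a' : A, Dk (k - l) a * Dk 0 a' = Dk 0 a' * Dk (k - l) a :=
        fun a' => hcomm (k - l) (hsub_ne hlle hlk)
          (le_trans (hdeg_mono tsub_le_self) hkN) a a'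
      rw [hfoldsmul t _ hckl (Dk l),
        ih l (le_trans (le_of_lt (hdeg_lt hlle hlk)) hkN)
          (by have := hdeg_lt hlle hlk; simp only [List.length_cons] at hlen; omega)]
      simp
  -- decomposition lemma
  have hdecomp : ∀ b : B, (∀ x : A, star x = x → b * Dk 0 x = Dk 0 x * b) →
      ∀ a' : A, b * Dk 0 a' = Dk 0 a' * b := by
    intro b hb a'
    set x : A := (2 : ℂ)⁻¹ • (a' + star a') with hxdef
    set y : A := (Complex.I * (2 : ℂ)⁻¹) • (star a' - a') with hydef
    have hx : star x = x := by
      rw [hxdef, star_smul, star_add, star_star,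
        show (star ((2:ℂ)⁻¹)) = (2:ℂ)⁻¹ by simp [Complex.star_def], add_comm]
    have hy : star y = y := by
      rw [hydef, star_smul, star_sub, star_star,
        show (star (Complex.I * (2:ℂ)⁻¹)) = -(Complex.I * (2:ℂ)⁻¹) by
          simp [Complex.ext_iff],
        neg_smul, ← smul_neg, neg_sub]
    have ha' : a' = x + Complex.I • y := by
      rw [hxdef, hydef, smul_smul,
        show Complex.I * (Complex.I * (2:ℂ)⁻¹) = -(2:ℂ)⁻¹ by
          rw [← mul_assoc, Complex.I_mul_I]; ring]
      module
    have hDa' : Dk 0 a' = Dk 0 x + Complex.I • Dk 0 y := by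
      rw [ha', hadd]
      congr 1
      exact hsmul 0 Complex.I y
    rw [hDa', mul_add, add_mul, hb x hx, mul_smul_comm, smul_mul_assoc, hb y hy]
  -- (iii) → (i)
  have imp31 : (∀ k : Fin m →₀ ℕ, k ≠ 0 → ∀ a a' : A,
        Dk k a * Dk 0 a' = Dk 0 a' * Dk k a) →
      (∀ k : Fin m →₀ ℕ, ∀ l : List A, l.length = (∑ i, k i) + 1 →
        l.foldl (opbrkt (Dk 0)) (Dk k) = 0) := by
    intro h3 k l hl
    exact hvanish (∑ i, k i) (fun j hj _ a a' => h3 j hj a a') l k le_rfl (by omega)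
  -- (iii) → (ii)
  have imp32 : (∀ k : Fin m →₀ ℕ, k ≠ 0 → ∀ a a' : A,
        Dk k a * Dk 0 a' = Dk 0 a' * Dk k a) →
      (∀ k : Fin m →₀ ℕ, k ≠ 0 → ∀ a : A, ∀ l : List A, l.length = (∑ i, k i) →
        (l.map (Dk 0)).foldl ringbrkt (Dk k a) = 0) := by
    intro h3 k hk a l hl
    have hpos : 1 ≤ l.length := by rw [hl]; exact hdeg_pos k hk
    match l, hpos with
    | a₁ :: t, _ =>
      rw [List.map_cons, List.foldl_cons,
        show ringbrkt (Dk k a) (Dk 0 a₁) = 0 by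
          rw [ringbrkt, h3 k hk a a₁, sub_self]]
      exact foldl_ringbrkt_zero _
  -- (ii) → (iii)
  have imp23 : (∀ k : Fin m →₀ ℕ, k ≠ 0 → ∀ a : A, ∀ l : List A, l.length = (∑ i, k i) →
        (l.map (Dk 0)).foldl ringbrkt (Dk k a) = 0) →
      (∀ k : Fin m →₀ ℕ, k ≠ 0 → ∀ a a' : A,
        Dk k a * Dk 0 a' = Dk 0 a' * Dk k a) := by
    intro h2 k hk a
    apply hdecomp
    intro x hx
    have hDx : star (Dk 0 x) = Dk 0 x := by rw [← hstar, hx]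
    have hfold := h2 k hk a (List.replicate (∑ i, k i) x) (by simp)
    rw [List.map_replicate] at hfold
    exact comm_of_selfadj_nested hDx (hdeg_pos k hk) hfold
  -- (i) → (iii)
  have imp13 : (∀ k : Fin m →₀ ℕ, ∀ l : List A, l.length = (∑ i, k i) + 1 →
        l.foldl (opbrkt (Dk 0)) (Dk k) = 0) →
      (∀ k : Fin m →₀ ℕ, k ≠ 0 → ∀ a a' : A,
        Dk k a * Dk 0 a' = Dk 0 a' * Dk k a) := by
    intro h1
    suffices H : ∀ n : ℕ, ∀ k : Fin m →₀ ℕ, (∑ i, k i) ≤ n → k ≠ 0 →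
        ∀ a a' : A, Dk k a * Dk 0 a' = Dk 0 a' * Dk k a by
      intro k hk a a'
      exact H (∑ i, k i) k le_rfl hk a a'
    intro n
    induction n with
    | zero =>
      intro k hk0 hk a a'
      have := hdeg_pos k hk
      omega
    | succ n ih =>
      intro k hkn hk a
      apply hdecomp
      intro x hx
      have hDx : star (Dk 0 x) = Dk 0 x := by rw [← hstar, hx]
      set nk := ∑ i, k i with hnk
      have hnkpos : 1 ≤ nk := hdeg_pos k hk
      have hfold := h1 k (a :: List.replicate nk x) (by simp [hnk])
      rw [List.foldl_cons, hbracket k a,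
        hfoldsum (List.replicate nk x) _ (fun l y => Dk (k - l) a * Dk l y)] at hfold
      have hfold1 := congrFun hfold 1
      rw [show (0 : A → B) 1 = 0 from rfl] at hfold1
      set s := (Finset.Iic k).erase k with hs
      have h0s : (0 : Fin m →₀ ℕ) ∈ s :=
        Finset.mem_erase.mpr ⟨Ne.symm hk, Finset.mem_Iic.mpr zero_le⟩
      rw [← Finset.add_sum_erase _ _ h0s] at hfold1
      have hrest : ∀ l ∈ s.erase 0,
          (List.replicate nk x).foldl (opbrkt (Dk 0)) (fun y => Dk (k - l) a * Dk l y) 1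
            = 0 := by
        intro l hls
        have hl0 : l ≠ 0 := (Finset.mem_erase.mp hls).1
        have hlk : l ≠ k := (Finset.mem_erase.mp ((Finset.mem_erase.mp hls).2)).1
        have hlle : l ≤ k := Finset.mem_Iic.mp
          (Finset.mem_erase.mp ((Finset.mem_erase.mp hls).2)).2
        have hckl : ∀ a'' : A, Dk (k - l) a * Dk 0 a'' = Dk 0 a'' * Dk (k - l) a := by
          intro a''
          refine ih (k - l) ?_ (hsub_ne hlle hlk) a a''
          have := hdeg_sub_lt hlle hl0
          omega
        rw [hfoldsmul (List.replicate nk x) _ hckl (Dk l),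
          hvanish n (fun j hj hjn a1 a2 => ih j hjn hj a1 a2) (List.replicate nk x) l
            (by have := hdeg_lt hlle hlk; omega)
            (by have := hdeg_lt hlle hlk; simp only [List.length_replicate]; omega)]
        simp
      rw [Finset.sum_eq_zero hrest, add_zero] at hfold1
      -- the l = 0 term
      rw [show (fun y => Dk (k - 0) a * Dk 0 y) = fun y => Dk k a * Dk 0 y by
          funext y; rw [tsub_zero],
        hfoldD0 (List.replicate nk x) (Dk k a)] at hfold1
      simp only [hone, mul_one, List.map_replicate] at hfold1
      exact comm_of_selfadj_nested hDx hnkpos hfold1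
  refine ⟨⟨fun h1 => imp32 (imp13 h1), fun h2 => imp31 (imp23 h2)⟩, imp23, imp32⟩
end

section
/- Let x : ℝ → ℂ be an infinitely differentiable function all of whose derivatives vanish at 0, including the value itself: x⁽ⁿ⁾(0) = 0 for all n ≥ 0. Then x can be approximated, in the topology of uniform convergence on compact sets of each derivative, by smooth functions vanishing on a neighbourhood of 0; precisely, for every n ∈ ℕ, every T > 0 and every ε > 0 there exists an infinitely differentiable function y : ℝ → ℂ that is identically zero on some open neighbourhood of 0 and satisfies |x⁽ᵏ⁾(t) − y⁽ᵏ⁾(t)| < ε for all 0 ≤ k ≤ n and all t with |t| ≤ T. -/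
open Set Metric Filter

/-- Decay of derivatives near 0 for a flat function. -/
lemma stmt19_decay (x : ℝ → ℂ) (hx : ContDiff ℝ (⊤ : ℕ∞) x)
    (h0 : ∀ n : ℕ, iteratedDeriv n x 0 = 0) (N : ℕ) (B : ℝ)
    (hB : ∀ t ∈ Set.Icc (-1:ℝ) 1, ‖iteratedDeriv N x t‖ ≤ B) :
    ∀ p m : ℕ, m + p = N → ∀ δ : ℝ, 0 < δ → δ ≤ 1 → ∀ t : ℝ, |t| ≤ δ →
      ‖iteratedDeriv m x t‖ ≤ δ ^ p * B := by
  intro p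
  induction p with
  | zero =>
    intro m hm δ hδ hδ1 t ht
    subst hm
    simpa using hB t (abs_le.mp (ht.trans hδ1))
  | succ p ih =>
    intro m hm δ hδ hδ1 t ht
    have hB0 : 0 ≤ B := le_trans (norm_nonneg _) (hB 0 ⟨by norm_num, by norm_num⟩)
    have hdiff : ∀ s ∈ Set.Icc (-δ) δ, DifferentiableAt ℝ (iteratedDeriv m x) s := by
      intro s _
      exact (hx.differentiable_iteratedDeriv m (by exact_mod_cast lt_top_iff_ne_top.2 (by simp))).differentiableAt
    have hbound : ∀ s ∈ Set.Icc (-δ) δ, ‖deriv (iteratedDeriv m x) s‖ ≤ δ ^ p * B := by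
      intro s hs
      have : deriv (iteratedDeriv m x) s = iteratedDeriv (m+1) x s := by
        rw [iteratedDeriv_succ]
      rw [this]
      exact ih (m+1) (by omega) δ hδ hδ1 s (abs_le.mpr hs)
    have ht' : t ∈ Set.Icc (-δ) δ := abs_le.mp ht
    have h0' : (0:ℝ) ∈ Set.Icc (-δ) δ := ⟨by linarith, by linarith⟩
    have := Convex.norm_image_sub_le_of_norm_deriv_le hdiff hbound (convex_Icc _ _) h0' ht'
    rw [h0 m, sub_zero] at this
    calc ‖iteratedDeriv m x t‖ ≤ δ ^ p * B * ‖t - 0‖ := this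
      _ ≤ δ ^ p * B * δ := by
          apply mul_le_mul_of_nonneg_left (by simpa using ht) (by positivity)
      _ = δ ^ (p+1) * B := by ring

/-- A smooth compactly supported function has uniformly bounded derivatives up to any order. -/
lemma stmt19_bddfam (f : ℝ → ℝ) (hf : ContDiff ℝ (⊤ : ℕ∞) f)
    (hsupp : HasCompactSupport f) (n : ℕ) :
    ∃ M : ℝ, 0 ≤ M ∧ ∀ i ≤ n, ∀ t : ℝ, ‖iteratedDeriv i f t‖ ≤ M := by
  have key : ∀ i : ℕ, ∃ C : ℝ, ∀ t : ℝ, ‖iteratedDeriv i f t‖ ≤ C := by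
    intro i
    have hc : HasCompactSupport (iteratedDeriv i f) := by
      have h1 : HasCompactSupport (iteratedFDeriv ℝ i f) := hsupp.iteratedFDeriv i
      have : iteratedDeriv i f = (fun L : ContinuousMultilinearMap ℝ (fun _ : Fin i => ℝ) ℝ =>
          L (fun _ => 1)) ∘ (iteratedFDeriv ℝ i f) := by
        funext t
        simp [iteratedDeriv_eq_iteratedFDeriv, Function.comp]
      rw [this]
      exact h1.comp_left (by simp)
    exact hc.exists_bound_of_continuous (hf.continuous_iteratedDeriv i (by exact_mod_cast le_top))
  induction n with
  | zero =>
    obtain ⟨C, hC⟩ := key 0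
    exact ⟨max C 0, le_max_right _ _, fun i hi t => by
      interval_cases i; exact (hC t).trans (le_max_left _ _)⟩
  | succ n ihn =>
    obtain ⟨M, hM0, hM⟩ := ihn
    obtain ⟨C, hC⟩ := key (n+1)
    refine ⟨max M C, le_trans hM0 (le_max_left _ _), fun i hi t => ?_⟩
    rcases Nat.lt_or_ge i (n+1) with h | h
    · exact (hM i (by omega) t).trans (le_max_left _ _)
    · have : i = n + 1 := by omega
      subst this
      exact (hC t).trans (le_max_right _ _)

/-- Let `x : ℝ → ℂ` be a smooth function all of whose derivatives
(including the function itself) vanish at `0`. Then `x` can be approximated, uniformly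
on compact sets in each derivative, by smooth functions vanishing on a neighbourhood
of `0`: for all `n`, `T > 0` and `ε > 0` there is a smooth `y : ℝ → ℂ` vanishing on an
open neighbourhood of `0` with `‖x⁽ᵏ⁾(t) − y⁽ᵏ⁾(t)‖ < ε` for all `k ≤ n`, `|t| ≤ T`. -/
theorem stmt19 (x : ℝ → ℂ) (hx : ContDiff ℝ (⊤ : ℕ∞) x)
    (h0 : ∀ n : ℕ, iteratedDeriv n x 0 = 0) :
    ∀ (n : ℕ) (T ε : ℝ), 0 < T → 0 < ε →
      ∃ y : ℝ → ℂ, ContDiff ℝ (⊤ : ℕ∞) y ∧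
        (∃ U : Set ℝ, IsOpen U ∧ (0 : ℝ) ∈ U ∧ ∀ t ∈ U, y t = 0) ∧
        ∀ k ≤ n, ∀ t : ℝ, |t| ≤ T →
          ‖iteratedDeriv k x t - iteratedDeriv k y t‖ < ε := by
  intro n T ε hT hε
  -- the bump function
  set φ : ContDiffBump (0:ℝ) := ⟨1, 2, one_pos, one_lt_two⟩ with hφdef
  have hφc : ContDiff ℝ (⊤ : ℕ∞) (φ : ℝ → ℝ) := φ.contDiff
  -- bound B on the (n+1)-st derivative of x on [-1,1]
  obtain ⟨B, hB⟩ := (isCompact_Icc (a := (-1:ℝ)) (b := 1)).exists_bound_of_continuousOn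
    ((hx.continuous_iteratedDeriv (n+1) (by exact_mod_cast le_top)).continuousOn)
  have hB0 : 0 ≤ B := le_trans (norm_nonneg _) (hB 0 ⟨by norm_num, by norm_num⟩)
  -- bound M on derivatives of φ up to order n
  obtain ⟨M, hM0, hM⟩ := stmt19_bddfam φ hφc φ.hasCompactSupport n
  -- choose δ
  set D : ℝ := 2^n * 2^(n+1) * (M+1) * (B+1) + 1 with hDdef
  have hD : 0 < D := by positivity
  set δ : ℝ := min (1/2) (ε / (2*D)) with hδdef
  have hδ0 : 0 < δ := lt_min (by norm_num) (by positivity)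
  have hδhalf : δ ≤ 1/2 := min_le_left _ _
  have hδε : δ ≤ ε / (2*D) := min_le_right _ _
  -- the cutoff
  set χ : ℝ → ℝ := fun s => φ (δ⁻¹ * s) with hχdef
  have hχc : ContDiff ℝ (⊤ : ℕ∞) χ := hφc.comp (contDiff_const.mul contDiff_id)
  set z : ℝ → ℂ := fun s => χ s • x s with hzdef
  have hzc : ContDiff ℝ (⊤ : ℕ∞) z := hχc.smul hx
  refine ⟨fun s => x s - z s, hx.sub hzc, ?_, ?_⟩
  · -- vanishing near 0
    refine ⟨ball (0:ℝ) δ, isOpen_ball, mem_ball_self hδ0, fun t ht => ?_⟩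
    have h1 : χ t = 1 := by
      apply φ.one_of_mem_closedBall
      rw [mem_ball, Real.dist_eq, sub_zero] at ht
      simp only [mem_closedBall, Real.dist_eq, sub_zero]
      have : |δ⁻¹ * t| = δ⁻¹ * |t| := by
        rw [abs_mul, abs_of_nonneg (by positivity : (0:ℝ) ≤ δ⁻¹)]
      rw [this]
      show δ⁻¹ * |t| ≤ φ.rIn
      have : δ⁻¹ * |t| ≤ δ⁻¹ * δ := by gcongr
      rw [inv_mul_cancel₀ hδ0.ne'] at this
      simpa [hφdef] using this
    simp [hzdef, h1]
  · -- the estimate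
    intro k hk t ht
    -- difference of derivatives equals derivative of z
    set y : ℝ → ℂ := fun s => x s - z s with hydef
    have hdiff : iteratedDeriv k x t - iteratedDeriv k y t = iteratedDeriv k z t := by
      have hyc : ContDiff ℝ (k : WithTop ℕ∞) y := (hx.sub hzc).of_le (by exact_mod_cast le_top)
      have hzk : ContDiff ℝ (k : WithTop ℕ∞) z := hzc.of_le (by exact_mod_cast le_top)
      have hxeq : x = y + z := by
        funext s
        simp only [Pi.add_apply, hydef, hzdef]
        ring
      have hsum : iteratedDeriv k (y + z) t = iteratedDeriv k y t + iteratedDeriv k z t := by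
        rw [iteratedDeriv_eq_iteratedFDeriv, iteratedDeriv_eq_iteratedFDeriv,
          iteratedDeriv_eq_iteratedFDeriv, iteratedFDeriv_add_apply hyc.contDiffAt hzk.contDiffAt]
        simp
      rw [hxeq, hsum]
      ring
    rw [hdiff]
    -- now bound ‖iteratedDeriv k z t‖
    rcases le_or_gt |t| (2*δ) with hcase | hcase
    · -- main estimate
      have h2δ1 : 2*δ ≤ 1 := by linarith
      -- derivative bounds for χ
      have hχbound : ∀ i ≤ n, ‖iteratedFDeriv ℝ i χ t‖ ≤ (δ⁻¹)^i * M := by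
        intro i hi
        rw [norm_iteratedFDeriv_eq_norm_iteratedDeriv]
        have : iteratedDeriv i χ = fun s => (δ⁻¹)^i * iteratedDeriv i (φ : ℝ → ℝ) (δ⁻¹ * s) :=
          iteratedDeriv_comp_const_mul (hφc.of_le (by exact_mod_cast le_top)) δ⁻¹
        rw [this]
        rw [norm_mul, norm_pow, Real.norm_eq_abs, abs_of_nonneg (by positivity : (0:ℝ) ≤ δ⁻¹)]
        gcongr
        exact hM i hi _
      -- derivative bounds for x
      have hxbound : ∀ m ≤ n, ‖iteratedFDeriv ℝ m x t‖ ≤ (2*δ)^(n+1-m) * B := by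
        intro m hm
        rw [norm_iteratedFDeriv_eq_norm_iteratedDeriv]
        exact stmt19_decay x hx h0 (n+1) B hB (n+1-m) m (by omega) (2*δ) (by linarith) h2δ1 t hcase
      -- Leibniz
      have hleib := norm_iteratedFDeriv_smul_le (𝕜 := ℝ) (f := χ) (g := x)
        (N := ((⊤:ℕ∞) : WithTop ℕ∞)) hχc hx t (n := k) (by exact_mod_cast le_top)
      rw [← norm_iteratedFDeriv_eq_norm_iteratedDeriv]
      have hsumle : ∑ i ∈ Finset.range (k+1),
            (k.choose i : ℝ) * ‖iteratedFDeriv ℝ i χ t‖ * ‖iteratedFDeriv ℝ (k-i) x t‖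
          ≤ D * δ := by
        calc ∑ i ∈ Finset.range (k+1),
            (k.choose i : ℝ) * ‖iteratedFDeriv ℝ i χ t‖ * ‖iteratedFDeriv ℝ (k-i) x t‖
            ≤ ∑ i ∈ Finset.range (k+1), (k.choose i : ℝ) * (2^(n+1) * M * B * δ) := by
              apply Finset.sum_le_sum
              intro i hi
              have hik : i ≤ k := Nat.lt_succ_iff.mp (Finset.mem_range.mp hi)
              have h1 := hχbound i (le_trans hik hk)
              have h2 := hxbound (k-i) (le_trans (Nat.sub_le _ _) hk)
              calc (k.choose i : ℝ) * ‖iteratedFDeriv ℝ i χ t‖ * ‖iteratedFDeriv ℝ (k-i) x t‖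
                  ≤ (k.choose i : ℝ) * ((δ⁻¹)^i * M) * ((2*δ)^(n+1-(k-i)) * B) := by
                    gcongr
                _ = (k.choose i : ℝ) * (M * B * ((δ⁻¹)^i * (2*δ)^(n+1-(k-i)))) := by ring
                _ ≤ (k.choose i : ℝ) * (2^(n+1) * M * B * δ) := by
                    apply mul_le_mul_of_nonneg_left _ (by positivity)
                    have hexp : n+1-(k-i) = i + (n+1-k) := by omega
                    have hkey : (δ⁻¹)^i * (2*δ)^(n+1-(k-i)) ≤ 2^(n+1) * δ := by
                      have hm : 1 ≤ n+1-k := by omega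
                      have h2δ : δ⁻¹ * (2*δ) = 2 := by field_simp
                      have hsplit : (δ⁻¹)^i * (2*δ)^(i+(n+1-k)) = 2^i * (2*δ)^(n+1-k) := by
                        rw [pow_add, ← mul_assoc, ← mul_pow, h2δ]
                      rw [hexp, hsplit]
                      have hstep : (2*δ)^(n+1-k) ≤ 2^(n+1-k) * δ := by
                        rw [mul_pow]
                        apply mul_le_mul_of_nonneg_left _ (by positivity)
                        calc δ^(n+1-k) ≤ δ^1 :=
                              pow_le_pow_of_le_one hδ0.le (by linarith) hm
                          _ = δ := pow_one δ
                      calc (2:ℝ)^i * (2*δ)^(n+1-k) ≤ 2^i * (2^(n+1-k) * δ) :=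
                            mul_le_mul_of_nonneg_left hstep (by positivity)
                        _ = 2^(i+(n+1-k)) * δ := by rw [pow_add]; ring
                        _ ≤ 2^(n+1) * δ := by
                            apply mul_le_mul_of_nonneg_right _ hδ0.le
                            exact pow_le_pow_right₀ one_le_two (by omega)
                    calc M * B * ((δ⁻¹)^i * (2*δ)^(n+1-(k-i)))
                        ≤ M * B * (2^(n+1) * δ) :=
                          mul_le_mul_of_nonneg_left hkey (by positivity)
                      _ = 2^(n+1) * M * B * δ := by ring
          _ = (2^k : ℝ) * (2^(n+1) * M * B * δ) := by
              rw [← Finset.sum_mul]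
              congr 1
              rw [← Nat.cast_sum, Nat.sum_range_choose]
              push_cast
              ring
          _ ≤ D * δ := by
              have h2k : (2:ℝ)^k ≤ 2^n := pow_le_pow_right₀ one_le_two hk
              have hMB : M * B ≤ (M+1) * (B+1) := by nlinarith
              have h2 : (2:ℝ)^k * (2^(n+1)*M*B) ≤ 2^n * (2^(n+1)*((M+1)*(B+1))) := by
                apply mul_le_mul h2k _ (by positivity) (by positivity)
                calc (2:ℝ)^(n+1)*M*B = 2^(n+1)*(M*B) := by ring
                  _ ≤ 2^(n+1)*((M+1)*(B+1)) := mul_le_mul_of_nonneg_left hMB (by positivity)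
              have h3 : (2:ℝ)^n * (2^(n+1)*((M+1)*(B+1))) ≤ D := by
                rw [hDdef]
                have : (2:ℝ)^n * (2^(n+1)*((M+1)*(B+1))) = 2^n*2^(n+1)*(M+1)*(B+1) := by ring
                linarith
              calc (2:ℝ)^k * (2^(n+1) * M * B * δ)
                  = ((2:ℝ)^k * (2^(n+1)*M*B)) * δ := by ring
                _ ≤ D * δ := mul_le_mul_of_nonneg_right (h2.trans h3) hδ0.le
      have hfin : D * δ < ε := by
        calc D * δ ≤ D * (ε / (2*D)) := by gcongr
          _ = ε / 2 := by field_simp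
          _ < ε := by linarith
      exact lt_of_le_of_lt (hleib.trans hsumle) hfin
    · -- t outside the support of z
      have hz0 : z =ᶠ[nhds t] (fun _ => (0:ℂ)) := by
        have hopen : IsOpen {s : ℝ | 2*δ < |s|} := by
          have : Continuous fun s : ℝ => |s| := continuous_abs
          exact isOpen_lt continuous_const this
        refine eventually_of_mem (hopen.mem_nhds hcase) (fun s hs => ?_)
        have : χ s = 0 := by
          apply φ.zero_of_le_dist
          simp only [Real.dist_eq, sub_zero]
          have : |δ⁻¹ * s| = δ⁻¹ * |s| := by
            rw [abs_mul, abs_of_nonneg (by positivity : (0:ℝ) ≤ δ⁻¹)]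
          rw [this]
          show φ.rOut ≤ δ⁻¹ * |s|
          have hs' : 2*δ < |s| := hs
          have : δ⁻¹ * (2*δ) ≤ δ⁻¹ * |s| := by gcongr
          have h2 : δ⁻¹ * (2*δ) = 2 := by field_simp
          rw [h2] at this
          simpa [hφdef] using this
        simp [hzdef, this]
      rw [hz0.iteratedDeriv_eq k]
      simpa [iteratedDeriv_eq_iteratedFDeriv, iteratedFDeriv_zero_fun] using hε
end
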